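/- arXiv:2404.08183 — 4 statements merged into one kernel-verified Lean document; each statement's English description precedes it below -/
import Mathlib

section
/- Let n ≥ 2 and let a, b be positive integers with ⌈a/2⌉ ≤ b ≤ a. Then the sequence (1, a, a, ..., a, b) of length n+1 (with n−1 middle entries all equal to a) is a pure O-sequence. -/
/-- The degree of a monomial (exponent vector) in `s` variables. -/
def mdeg {s : ℕ} (u : Fin s → ℕ) : ℕ := ∑ i, u i

/-- A (nonempty, finite) set of monomials is an order ideal if it is closed
under divisibility (componentwise `≤` of exponent vectors). -/
def IsOrderIdeal {s : ℕ} (A : Finset (Fin s → ℕ)) : Prop :=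
  A.Nonempty ∧ ∀ u ∈ A, ∀ v : Fin s → ℕ, v ≤ u → v ∈ A

/-- `u` is a maximal element of `A` with respect to divisibility. -/
def IsMaximalIn {s : ℕ} (A : Finset (Fin s → ℕ)) (u : Fin s → ℕ) : Prop :=
  u ∈ A ∧ ∀ v ∈ A, u ≤ v → v = u

/-- An order ideal is pure if all its maximal monomials have the same degree. -/
def IsPure {s : ℕ} (A : Finset (Fin s → ℕ)) : Prop :=
  ∀ u v : Fin s → ℕ, IsMaximalIn A u → IsMaximalIn A v → mdeg u = mdeg v

/-- The maximal degree of a monomial in `A`. -/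
def topDegree {s : ℕ} (A : Finset (Fin s → ℕ)) : ℕ := A.sup mdeg

/-- The number of monomials of degree `i` in `A`. -/
def hVec {s : ℕ} (A : Finset (Fin s → ℕ)) (i : ℕ) : ℕ :=
  (A.filter (fun u => mdeg u = i)).card

/-- The h-vector `(h_0, h_1, ..., h_n)` of `A`, where `n = topDegree A`. -/
def hVector {s : ℕ} (A : Finset (Fin s → ℕ)) : List ℕ :=
  (List.range (topDegree A + 1)).map (hVec A)

/-- A finite sequence is a pure O-sequence if it is the h-vector of some
pure order ideal of monomials. -/
def IsPureOSequence (h : List ℕ) : Prop :=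
  ∃ (s : ℕ) (A : Finset (Fin s → ℕ)), IsOrderIdeal A ∧ IsPure A ∧ hVector A = h

namespace PureAux

lemma mdeg_mono {s : ℕ} {u v : Fin s → ℕ} (h : u ≤ v) : mdeg u ≤ mdeg v :=
  Finset.sum_le_sum fun i _ => h i

lemma mdeg_eq_single {s : ℕ} (u : Fin s → ℕ) (p : Fin s)
    (h : ∀ i, i ≠ p → u i = 0) : mdeg u = u p := by
  classical
  have := Finset.sum_subset (Finset.subset_univ {p})
    (fun i _ hi => h i (by simpa using hi))
  rw [mdeg, ← this, Finset.sum_singleton]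

lemma mdeg_eq_pair {s : ℕ} (u : Fin s → ℕ) (p q : Fin s) (hpq : p ≠ q)
    (h : ∀ i, i ≠ p → i ≠ q → u i = 0) : mdeg u = u p + u q := by
  classical
  have := Finset.sum_subset (Finset.subset_univ {p, q})
    (fun i _ hi => by
      simp only [Finset.mem_insert, Finset.mem_singleton, not_or] at hi
      exact h i hi.1 hi.2)
  rw [mdeg, ← this, Finset.sum_pair hpq]

/-- The `j`-th monomial of degree `d`. -/
def phi (a n k d j : ℕ) : Fin a → ℕ := fun i =>
  if j % 2 = 1 ∧ j < 2 * k then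
    (if (i : ℕ) = j then 1 else if (i : ℕ) + 1 = j then d - 1 else 0)
  else if (i : ℕ) = j then d else 0

def genIdx (a k : ℕ) : Finset ℕ := (Finset.range a).filter fun j => j % 2 = 1 ∨ 2 * k ≤ j

def Jset (a k n d : ℕ) : Finset ℕ :=
  (Finset.range a).filter fun j => j % 2 = 1 ∨ 2 * k ≤ j ∨ d < n

def idealA (a n k : ℕ) : Finset (Fin a → ℕ) :=
  (genIdx a k).biUnion fun j => Finset.Iic (phi a n k n j)

lemma mem_idealA {a n k : ℕ} {u : Fin a → ℕ} :
    u ∈ idealA a n k ↔ ∃ j ∈ genIdx a k, u ≤ phi a n k n j := by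
  simp [idealA, Finset.mem_biUnion, Finset.mem_Iic]

lemma mem_genIdx {a k j : ℕ} :
    j ∈ genIdx a k ↔ j < a ∧ (j % 2 = 1 ∨ 2 * k ≤ j) := by
  simp [genIdx, Finset.mem_filter]

lemma mem_Jset {a k n d j : ℕ} :
    j ∈ Jset a k n d ↔ j < a ∧ (j % 2 = 1 ∨ 2 * k ≤ j ∨ d < n) := by
  simp [Jset, Finset.mem_filter]

lemma phi_self_pair {a n k d j : ℕ} (c : j % 2 = 1 ∧ j < 2 * k) (hj : j < a) :
    phi a n k d j ⟨j, hj⟩ = 1 := by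
  show (if j % 2 = 1 ∧ j < 2 * k then
    (if j = j then 1 else if j + 1 = j then d - 1 else 0)
    else if j = j then d else 0) = 1
  rw [if_pos c, if_pos rfl]

lemma phi_pred_pair {a n k d j : ℕ} (c : j % 2 = 1 ∧ j < 2 * k) (hj : j - 1 < a) :
    phi a n k d j ⟨j - 1, hj⟩ = d - 1 := by
  have hj1 : 1 ≤ j := by omega
  show (if j % 2 = 1 ∧ j < 2 * k then
    (if j - 1 = j then 1 else if j - 1 + 1 = j then d - 1 else 0)
    else if j - 1 = j then d else 0) = d - 1
  rw [if_pos c, if_neg (by omega), if_pos (by omega)]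

lemma phi_self_single {a n k d j : ℕ} (c : ¬(j % 2 = 1 ∧ j < 2 * k)) (hj : j < a) :
    phi a n k d j ⟨j, hj⟩ = d := by
  show (if j % 2 = 1 ∧ j < 2 * k then
    (if j = j then 1 else if j + 1 = j then d - 1 else 0)
    else if j = j then d else 0) = d
  rw [if_neg c, if_pos rfl]

lemma phi_apply_zero {a n k d j : ℕ} (i : Fin a)
    (h1 : (i : ℕ) ≠ j) (h2 : (i : ℕ) + 1 ≠ j) :
    phi a n k d j i = 0 := by
  simp only [phi]
  by_cases c : j % 2 = 1 ∧ j < 2 * k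
  · rw [if_pos c, if_neg h1, if_neg h2]
  · rw [if_neg c, if_neg h1]

lemma phi_apply_zero' {a n k d j : ℕ} (i : Fin a)
    (c : ¬(j % 2 = 1 ∧ j < 2 * k)) (h1 : (i : ℕ) ≠ j) :
    phi a n k d j i = 0 := by
  simp only [phi]
  rw [if_neg c, if_neg h1]

lemma mdeg_phi {a n k d j : ℕ} (hj : j < a) (hd : 1 ≤ d) :
    mdeg (phi a n k d j) = d := by
  by_cases c : j % 2 = 1 ∧ j < 2 * k
  · have hj1 : 1 ≤ j := by omega
    have h := mdeg_eq_pair (phi a n k d j) ⟨j, hj⟩ ⟨j - 1, by omega⟩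
      (by simp [Fin.ext_iff]; omega)
      (fun i h1 h2 => by
        simp only [Fin.ne_iff_vne] at h1 h2
        exact phi_apply_zero i (by simpa using h1) (by simp at h2 ⊢; omega))
    rw [h, phi_self_pair c hj, phi_pred_pair c (by omega)]
    omega
  · have h := mdeg_eq_single (phi a n k d j) ⟨j, hj⟩
      (fun i h1 => by
        simp only [Fin.ne_iff_vne] at h1
        exact phi_apply_zero' i c (by simpa using h1))
    rw [h, phi_self_single c hj]

lemma phi_ne {a n k d : ℕ} {j j' : ℕ} (hj' : j' < a) (hd : 1 ≤ d) (hlt : j < j') :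
    phi a n k d j ≠ phi a n k d j' := by
  intro h
  have h2 := congrFun h ⟨j', hj'⟩
  rw [phi_apply_zero (d := d) (n := n) (k := k) (j := j) ⟨j', hj'⟩ (by simp; omega)
    (by simp; omega)] at h2
  by_cases c : j' % 2 = 1 ∧ j' < 2 * k
  · rw [phi_self_pair c hj'] at h2; omega
  · rw [phi_self_single c hj'] at h2; omega

lemma phi_injOn {a n k d : ℕ} (hd : 1 ≤ d) :
    Set.InjOn (phi a n k d) (Finset.range a) := by
  intro j hj j' hj' h
  simp only [Finset.coe_range, Set.mem_Iio] at hj hj'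
  rcases Nat.lt_trichotomy j j' with hlt | heq | hlt
  · exact absurd h (phi_ne hj' hd hlt)
  · exact heq
  · exact absurd h.symm (phi_ne hj hd hlt)

/-- The key slicing lemma. -/
lemma slice {a n k d : ℕ} (h2k : 2 * k ≤ a) (hd1 : 1 ≤ d) (hdn : d ≤ n) :
    (idealA a n k).filter (fun u => mdeg u = d) = (Jset a k n d).image (phi a n k d) := by
  ext u
  rw [Finset.mem_filter, Finset.mem_image, mem_idealA]
  constructor
  · rintro ⟨⟨j, hjmem, hle⟩, hdeg⟩
    rw [mem_genIdx] at hjmem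
    obtain ⟨hja, hjP⟩ := hjmem
    by_cases c : j % 2 = 1 ∧ j < 2 * k
    · -- pair generator at (j-1, j)
      have hj1 : 1 ≤ j := by omega
      have hz : ∀ i : Fin a, (i : ℕ) ≠ j → (i : ℕ) + 1 ≠ j → u i = 0 := by
        intro i i1 i2
        have h' := hle i
        have h0' : phi a n k n j i = 0 := phi_apply_zero i i1 i2
        rw [h0'] at h'
        exact Nat.le_zero.mp h'
      have hup : u ⟨j, hja⟩ ≤ 1 := by
        have := hle ⟨j, hja⟩
        rwa [phi_self_pair c hja] at this
      have huq : u ⟨j - 1, by omega⟩ ≤ n - 1 := by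
        have := hle ⟨j - 1, by omega⟩
        rwa [phi_pred_pair c (by omega)] at this
      have hsum : mdeg u = u ⟨j, hja⟩ + u ⟨j - 1, by omega⟩ :=
        mdeg_eq_pair u _ _ (by simp [Fin.ext_iff]; omega)
          (fun i hh1 hh2 => by
            simp only [Fin.ne_iff_vne] at hh1 hh2
            exact hz i (by simpa using hh1) (by simp at hh2 ⊢; omega))
      rcases Nat.le_one_iff_eq_zero_or_eq_one.mp hup with h0 | h1'
      · -- u = phi d (j-1), single type, needs d < n
        have hq : u ⟨j - 1, by omega⟩ = d := by omega
        have hdn' : d < n := by omega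
        refine ⟨j - 1, mem_Jset.mpr (by omega), ?_⟩
        symm
        funext i
        have cc : ¬((j - 1) % 2 = 1 ∧ j - 1 < 2 * k) := by omega
        by_cases hi : (i : ℕ) = j - 1
        · have hie : i = (⟨j - 1, by omega⟩ : Fin a) := by simp [Fin.ext_iff, hi]
          rw [hie, phi_self_single cc (by omega), hq]
        · rw [phi_apply_zero' i cc hi]
          by_cases hi2 : (i : ℕ) = j
          · have hie : i = (⟨j, hja⟩ : Fin a) := by simp [Fin.ext_iff, hi2]
            rw [hie, h0]
          · exact hz i hi2 (by omega)
      · -- u = phi d j, pair type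
        have hq : u ⟨j - 1, by omega⟩ = d - 1 := by omega
        refine ⟨j, mem_Jset.mpr (by omega), ?_⟩
        symm
        funext i
        by_cases hi : (i : ℕ) = j
        · have hie : i = (⟨j, hja⟩ : Fin a) := by simp [Fin.ext_iff, hi]
          rw [hie, phi_self_pair c hja, h1']
        · by_cases hi2 : (i : ℕ) + 1 = j
          · have hie : i = (⟨j - 1, by omega⟩ : Fin a) := by simp [Fin.ext_iff]; omega
            rw [hie, phi_pred_pair c (by omega), hq]
          · rw [phi_apply_zero i hi hi2]
            exact hz i hi hi2
    · -- single generator at j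
      have hz : ∀ i : Fin a, (i : ℕ) ≠ j → u i = 0 := by
        intro i i1
        have h' := hle i
        have h0' : phi a n k n j i = 0 := phi_apply_zero' i c i1
        rw [h0'] at h'
        exact Nat.le_zero.mp h'
      have hup : u ⟨j, hja⟩ = d := by
        have := mdeg_eq_single u ⟨j, hja⟩
          (fun i hh => hz i (by simpa [Fin.ne_iff_vne] using hh))
        omega
      refine ⟨j, mem_Jset.mpr ⟨hja, by omega⟩, ?_⟩
      symm
      funext i
      by_cases hi : (i : ℕ) = j
      · have hie : i = (⟨j, hja⟩ : Fin a) := by simp [Fin.ext_iff, hi]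
        rw [hie, phi_self_single c hja, hup]
      · rw [phi_apply_zero' i c hi]
        exact hz i hi
  · rintro ⟨j, hjmem, rfl⟩
    rw [mem_Jset] at hjmem
    obtain ⟨hja, hjP⟩ := hjmem
    refine ⟨?_, mdeg_phi hja hd1⟩
    by_cases c : j % 2 = 1 ∧ j < 2 * k
    · refine ⟨j, mem_genIdx.mpr ⟨hja, by omega⟩, fun i => ?_⟩
      simp only [phi, if_pos c]
      split_ifs <;> omega
    · by_cases hc2 : 2 * k ≤ j
      · refine ⟨j, mem_genIdx.mpr ⟨hja, Or.inr hc2⟩, fun i => ?_⟩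
        simp only [phi, if_neg c]
        split_ifs <;> omega
      · have hdn' : d < n := by omega
        have c' : (j + 1) % 2 = 1 ∧ j + 1 < 2 * k := by omega
        refine ⟨j + 1, mem_genIdx.mpr ⟨by omega, by omega⟩, fun i => ?_⟩
        simp only [phi, if_neg c, if_pos c']
        split_ifs <;> omega

lemma card_genIdx {a k : ℕ} (h2k : 2 * k ≤ a) : (genIdx a k).card = a - k := by
  have key : ((Finset.range a).filter fun j => ¬(j % 2 = 1 ∨ 2 * k ≤ j)) =
      (Finset.range k).image (fun i => 2 * i) := by
    ext j
    simp only [Finset.mem_filter, Finset.mem_range, Finset.mem_image]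
    constructor
    · rintro ⟨hja, hP⟩
      exact ⟨j / 2, by omega, by omega⟩
    · rintro ⟨i, hi, rfl⟩
      omega
  have hcard := Finset.card_filter_add_card_filter_not
    (s := Finset.range a) (p := fun j => j % 2 = 1 ∨ 2 * k ≤ j)
  rw [key] at hcard
  have himg : ((Finset.range k).image (fun i => 2 * i)).card = k := by
    rw [Finset.card_image_of_injective _ (fun x y h => by omega), Finset.card_range]
  rw [himg, Finset.card_range] at hcard
  simp only [genIdx]
  omega

lemma Jset_subset {a k n d : ℕ} : Jset a k n d ⊆ Finset.range a :=
  Finset.filter_subset _ _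

lemma card_Jset_lt {a k n d : ℕ} (hdn : d < n) : (Jset a k n d).card = a := by
  have : Jset a k n d = Finset.range a := by
    ext j; simp only [mem_Jset, Finset.mem_range]; omega
  rw [this, Finset.card_range]

lemma Jset_top {a k n : ℕ} : Jset a k n n = genIdx a k := by
  ext j; simp only [mem_Jset, mem_genIdx]; omega

lemma last_mem_genIdx {a k : ℕ} (ha : 1 ≤ a) (h2k : 2 * k ≤ a) :
    a - 1 ∈ genIdx a k := by
  rw [mem_genIdx]; omega

lemma hVec_eq {a n k d : ℕ} (h2k : 2 * k ≤ a) (hd1 : 1 ≤ d) (hdn : d ≤ n) :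
    hVec (idealA a n k) d = (Jset a k n d).card := by
  rw [hVec, slice h2k hd1 hdn]
  exact Finset.card_image_of_injOn ((phi_injOn hd1).mono (by
    exact_mod_cast Finset.coe_subset.mpr Jset_subset))

end PureAux

open PureAux in
/-- For `n ≥ 2` and `⌈a/2⌉ ≤ b ≤ a`, the sequence `(1, a, a, ..., a, b)` of
length `n+1` is a pure O-sequence. -/
theorem stmt_2 (n a b : ℕ) (hn : 2 ≤ n) (ha : 0 < a) (hb : 0 < b)
    (h1 : (a + 1) / 2 ≤ b) (h2 : b ≤ a) :
    IsPureOSequence (1 :: (List.replicate (n - 1) a ++ [b])) := by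
  set k := a - b with hk
  have h2k : 2 * k ≤ a := by omega
  have hn1 : 1 ≤ n := by omega
  have hlast := last_mem_genIdx (k := k) (by omega) h2k
  refine ⟨a, idealA a n k, ⟨?_, ?_⟩, ?_, ?_⟩
  · exact ⟨phi a n k n (a - 1), mem_idealA.mpr ⟨a - 1, hlast, le_refl _⟩⟩
  · intro u hu v hv
    obtain ⟨j, hj, hle⟩ := mem_idealA.mp hu
    exact mem_idealA.mpr ⟨j, hj, le_trans hv hle⟩
  · -- purity
    intro u v hu hv
    have key : ∀ w, IsMaximalIn (idealA a n k) w → mdeg w = n := by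
      intro w hw
      obtain ⟨hwA, hwmax⟩ := hw
      obtain ⟨j, hj, hle⟩ := mem_idealA.mp hwA
      have hjA : phi a n k n j ∈ idealA a n k := mem_idealA.mpr ⟨j, hj, le_refl _⟩
      have hwj := hwmax _ hjA hle
      rw [← hwj, mdeg_phi (mem_genIdx.mp hj).1 hn1]
    rw [key u hu, key v hv]
  · -- h-vector
    have htop : topDegree (idealA a n k) = n := by
      apply le_antisymm
      · apply Finset.sup_le
        intro u hu
        obtain ⟨j, hj, hle⟩ := mem_idealA.mp hu
        calc mdeg u ≤ mdeg (phi a n k n j) := mdeg_mono hle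
          _ = n := mdeg_phi (mem_genIdx.mp hj).1 hn1
      · have := Finset.le_sup (f := mdeg)
          (mem_idealA.mpr ⟨a - 1, hlast, le_refl (phi a n k n (a - 1))⟩)
        rwa [mdeg_phi (by omega) hn1] at this
    have h0 : hVec (idealA a n k) 0 = 1 := by
      have : (idealA a n k).filter (fun u => mdeg u = 0) = {0} := by
        ext u
        rw [Finset.mem_filter, Finset.mem_singleton]
        constructor
        · rintro ⟨hu, hdeg⟩
          funext i
          have := (Finset.sum_eq_zero_iff).mp hdeg i (Finset.mem_univ i)
          simpa using this
        · rintro rfl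
          refine ⟨mem_idealA.mpr ⟨a - 1, hlast, fun i => Nat.zero_le _⟩, ?_⟩
          simp [mdeg]
      rw [hVec, this, Finset.card_singleton]
    have hmid : ∀ d, 1 ≤ d → d < n → hVec (idealA a n k) d = a := by
      intro d hd1 hdn
      rw [hVec_eq h2k hd1 (le_of_lt hdn), card_Jset_lt hdn]
    have hntop : hVec (idealA a n k) n = b := by
      rw [hVec_eq h2k hn1 le_rfl, Jset_top, card_genIdx h2k]
      omega
    rw [hVector, htop]
    apply List.ext_getElem
    · simp
      omega
    · intro i hi1 hi2
      simp only [List.getElem_map, List.getElem_range]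
      simp only [List.length_map, List.length_range] at hi1
      rcases Nat.eq_zero_or_pos i with rfl | hipos
      · simpa using h0
      · obtain ⟨m, rfl⟩ : ∃ m, i = m + 1 := ⟨i - 1, by omega⟩
        rw [List.getElem_cons_succ]
        by_cases hm : m < n - 1
        · rw [List.getElem_append_left (by simpa using hm), List.getElem_replicate]
          exact hmid (m + 1) (by omega) (by omega)
        · have hmn : m = n - 1 := by omega
          subst hmn
          rw [List.getElem_append_right (by simp)]
          simpa using (by rw [show (n - 1) + 1 = n by omega]; exact hntop)
end

section
/- Let n ≥ 4 and let a, b be positive integers with 2b < a. Then the sequence (1, a, a, ..., a, b) of length n+1 (with n−1 middle entries all equal to a) is not a pure O-sequence. -/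
namespace Stmt3Aux
open Finset
variable {s : ℕ}

lemma mdeg_mono {u v : Fin s → ℕ} (h : u ≤ v) : mdeg u ≤ mdeg v :=
  Finset.sum_le_sum fun i _ => h i

lemma mdeg_add (u v : Fin s → ℕ) : mdeg (u + v) = mdeg u + mdeg v := by
  simp [mdeg, Finset.sum_add_distrib]

lemma mdeg_single (i : Fin s) (c : ℕ) : mdeg (Pi.single i c) = c := by
  simp [mdeg]

def monoOf (p : Finset (Fin s)) : Fin s → ℕ := fun j => if j ∈ p then 1 else 0

lemma mdeg_monoOf (p : Finset (Fin s)) : mdeg (monoOf p) = p.card := by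
  simp [mdeg, monoOf]

lemma monoOf_le {u : Fin s → ℕ} {p : Finset (Fin s)} (h : ∀ j ∈ p, u j ≠ 0) : monoOf p ≤ u := by
  intro j
  by_cases hj : j ∈ p
  · simpa [monoOf, hj] using Nat.one_le_iff_ne_zero.2 (h j hj)
  · simp [monoOf, hj]

lemma monoOf_mono {p q : Finset (Fin s)} (h : p ⊆ q) : monoOf p ≤ monoOf q := by
  intro j
  by_cases hj : j ∈ p
  · simp [monoOf, hj, h hj]
  · simp [monoOf, hj]

lemma monoOf_inj {p q : Finset (Fin s)} (h : monoOf p = monoOf q) : p = q := by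
  ext j
  have := congrFun h j
  by_cases hp : j ∈ p <;> by_cases hq : j ∈ q <;> simp_all [monoOf]

def msupp (u : Fin s → ℕ) : Finset (Fin s) := univ.filter fun i => u i ≠ 0

lemma mem_msupp {u : Fin s → ℕ} {i : Fin s} : i ∈ msupp u ↔ u i ≠ 0 := by simp [msupp]

lemma card_msupp_le (u : Fin s → ℕ) : (msupp u).card ≤ mdeg u := by
  calc (msupp u).card = ∑ _i ∈ msupp u, 1 := (card_eq_sum_ones _)
    _ ≤ ∑ i ∈ msupp u, u i :=
        sum_le_sum fun i hi => Nat.one_le_iff_ne_zero.2 (mem_msupp.1 hi)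
    _ ≤ ∑ i, u i := sum_le_sum_of_subset (filter_subset _ _)

lemma exists_ne_zero_of_mdeg_ne_zero {u : Fin s → ℕ} (h : mdeg u ≠ 0) : ∃ i, u i ≠ 0 := by
  by_contra hc
  push_neg at hc
  exact h (by simp [mdeg, hc])

lemma single_le_iff {i : Fin s} {c : ℕ} {u : Fin s → ℕ} : Pi.single i c ≤ u ↔ c ≤ u i := by
  constructor
  · intro h
    simpa using h i
  · intro h j
    rcases eq_or_ne j i with rfl | hj
    · simpa using h
    · simp [Pi.single_apply, hj]


lemma exists_add_single {u : Fin s → ℕ} {i : Fin s} (hi : u i ≠ 0) :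
    ∃ v : Fin s → ℕ, u = v + Pi.single i 1 ∧ mdeg v + 1 = mdeg u := by
  refine ⟨fun j => u j - (Pi.single i 1 : Fin s → ℕ) j, funext fun j => ?_, ?_⟩
  · rcases eq_or_ne j i with rfl | hj
    · simp [Nat.sub_add_cancel (Nat.one_le_iff_ne_zero.2 hi)]
    · simp [Pi.single_apply, hj]
  · have : ∀ j, (fun j => u j - (Pi.single i 1 : Fin s → ℕ) j) j + (Pi.single i 1 : Fin s → ℕ) j = u j := by
      intro j
      rcases eq_or_ne j i with rfl | hj
      · simp [Nat.sub_add_cancel (Nat.one_le_iff_ne_zero.2 hi)]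
      · simp [Pi.single_apply, hj]
    calc mdeg (fun j => u j - (Pi.single i 1 : Fin s → ℕ) j) + 1
        = ∑ j, (u j - (Pi.single i 1 : Fin s → ℕ) j) + ∑ j, (Pi.single i 1 : Fin s → ℕ) j := by
          simp [mdeg]
      _ = ∑ j, ((u j - (Pi.single i 1 : Fin s → ℕ) j) + (Pi.single i 1 : Fin s → ℕ) j) := by
          rw [← Finset.sum_add_distrib]
      _ = mdeg u := by simp only [this]; rfl

lemma eq_single_of_mdeg_one {u : Fin s → ℕ} (h : mdeg u = 1) : ∃ i, u = Pi.single i 1 := by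
  obtain ⟨i, hi⟩ := exists_ne_zero_of_mdeg_ne_zero (u := u) (by omega)
  obtain ⟨v, hv, hdeg⟩ := exists_add_single hi
  have hv0 : mdeg v = 0 := by omega
  have : v = 0 := by
    funext j
    have := Finset.sum_eq_zero_iff.1 (show ∑ i, v i = 0 from hv0) j (mem_univ j)
    simpa using this
  exact ⟨i, by simpa [this] using hv⟩

lemma monoOf_pair {i j : Fin s} (h : i ≠ j) :
    (Pi.single i 1 : Fin s → ℕ) + Pi.single j 1 = monoOf {i, j} := by
  funext k
  rcases eq_or_ne k i with rfl | hki
  · simp [monoOf, Pi.single_apply, h.symm]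
  · rcases eq_or_ne k j with rfl | hkj
    · simp [monoOf, Pi.single_apply, hki]
    · simp [monoOf, Pi.single_apply, hki, hkj]

lemma single_add_self (i : Fin s) : (Pi.single i 1 : Fin s → ℕ) + Pi.single i 1 = Pi.single i 2 := by
  funext k
  rcases eq_or_ne k i with rfl | hk
  · simp
  · simp [Pi.single_apply, hk]

lemma mdeg_two_cases {w : Fin s → ℕ} (h : mdeg w = 2) :
    (∃ i, w = Pi.single i 2) ∨ (∃ p : Finset (Fin s), p.card = 2 ∧ w = monoOf p) := by
  obtain ⟨i, hi⟩ := exists_ne_zero_of_mdeg_ne_zero (u := w) (by omega)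
  obtain ⟨v, hv, hdeg⟩ := exists_add_single hi
  have hv1 : mdeg v = 1 := by omega
  obtain ⟨j, rfl⟩ := eq_single_of_mdeg_one hv1
  rcases eq_or_ne j i with rfl | hji
  · exact Or.inl ⟨j, by rw [hv, single_add_self]⟩
  · refine Or.inr ⟨{j, i}, ?_, ?_⟩
    · rw [Finset.card_insert_of_notMem (by simp [hji]), Finset.card_singleton]
    · rw [hv, monoOf_pair hji]

lemma not_eq_single_two {w : Fin s → ℕ} {v : Fin s} (h : w v = 1) :
    ¬ ∃ i, w = Pi.single i 2 := by
  rintro ⟨i, rfl⟩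
  rcases eq_or_ne v i with rfl | hvi
  · simp at h
  · simp [Pi.single_apply, hvi] at h

lemma monoOf_mem_iff {p : Finset (Fin s)} {j : Fin s} : monoOf p j ≠ 0 ↔ j ∈ p := by
  by_cases hj : j ∈ p <;> simp [monoOf, hj]


lemma no_triangle
    (A : Finset (Fin s → ℕ))
    (hdc : ∀ u ∈ A, ∀ v : Fin s → ℕ, v ≤ u → v ∈ A)
    (hext : ∀ u ∈ A, mdeg u ≤ 3 → ∃ i, u + Pi.single i 1 ∈ A)
    (hcard : (A.filter fun u => mdeg u = 1).card = (A.filter fun u => mdeg u = 2).card)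
    {x y z : Fin s} (hxy : x ≠ y) (hxz : x ≠ z) (hyz : y ≠ z)
    (htri : monoOf {x, y, z} ∈ A) : False := by
  classical
  set D2 := A.filter fun u => mdeg u = 2 with hD2
  set Vars := univ.filter (fun i : Fin s => Pi.single i 1 ∈ A) with hVarsdef
  set U := Vars.filter (fun i => Pi.single i 2 ∉ A) with hUdef
  set nonloops := D2.filter (fun w => ¬ ∃ i, w = Pi.single i 2) with hNLdef
  have hUmem : ∀ {i}, i ∈ U → (Pi.single i 1 ∈ A ∧ Pi.single i 2 ∉ A) := by
    intro i hi
    have h1 := mem_filter.1 hi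
    have h2 := mem_filter.1 h1.1
    exact ⟨h2.2, h1.2⟩
  have hVarsCard : Vars.card = (A.filter fun u => mdeg u = 1).card := by
    have himg : Vars.image (fun i => (Pi.single i 1 : Fin s → ℕ))
        = A.filter fun u => mdeg u = 1 := by
      ext u
      simp only [mem_image, mem_filter, hVarsdef, mem_univ, true_and]
      constructor
      · rintro ⟨i, hi, rfl⟩
        exact ⟨hi, mdeg_single i 1⟩
      · rintro ⟨hu, hdeg⟩
        obtain ⟨i, rfl⟩ := eq_single_of_mdeg_one hdeg
        exact ⟨i, hu, rfl⟩
    rw [← himg]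
    rw [card_image_of_injOn]
    intro i _ j _ hij
    by_contra hne
    have h0 := congrFun hij i
    simp [Pi.single_apply, hne] at h0
  have hLoopCard : (Vars.filter fun i => Pi.single i 2 ∈ A).card
      = (D2.filter fun w => ∃ i, w = Pi.single i 2).card := by
    have himg : (Vars.filter fun i => Pi.single i 2 ∈ A).image
          (fun i => (Pi.single i 2 : Fin s → ℕ))
        = D2.filter (fun w => ∃ i, w = Pi.single i 2) := by
      ext w
      simp only [mem_image, mem_filter, hVarsdef, hD2, mem_univ, true_and]
      constructor
      · rintro ⟨i, ⟨hi1, hi2⟩, rfl⟩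
        exact ⟨⟨hi2, mdeg_single i 2⟩, ⟨i, rfl⟩⟩
      · rintro ⟨⟨hwA, hwdeg⟩, ⟨i, rfl⟩⟩
        refine ⟨i, ⟨?_, hwA⟩, rfl⟩
        exact hdc _ hwA _ (by rw [single_le_iff]; simp)
    rw [← himg, card_image_of_injOn]
    intro i _ j _ hij
    by_contra hne
    have h0 := congrFun hij i
    simp [Pi.single_apply, hne] at h0
  have hUNL : U.card = nonloops.card := by
    have h1 := card_filter_add_card_filter_not
      (s := Vars) (p := fun i => Pi.single i 2 ∈ A)
    have h2 := card_filter_add_card_filter_not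
      (s := D2) (p := fun w => ∃ i, w = Pi.single i 2)
    have h3 : (Vars.filter fun i => ¬ Pi.single i 2 ∈ A) = U := rfl
    have h4 : (D2.filter fun w => ¬ ∃ i, w = Pi.single i 2) = nonloops := rfl
    rw [h3] at h1
    rw [h4] at h2
    omega
  have hNLpair : ∀ {w}, w ∈ nonloops → ∃ p : Finset (Fin s), p.card = 2 ∧ w = monoOf p := by
    intro w hw
    have h1 := mem_filter.1 hw
    have h2 := mem_filter.1 h1.1
    rcases mdeg_two_cases h2.2 with h | h
    · exact absurd h h1.2
    · exact h
  set t := fun v : Fin s => nonloops.filter (fun w => w v ≠ 0) with htdef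
  have hall_cond : ∀ S : Finset (Fin s), S ⊆ U → S.card ≤ (S.biUnion t).card := by
    intro S
    induction S using Finset.strongInduction with
    | _ S ih =>
      intro hS
      by_cases hmin : ∀ v ∈ S, 2 ≤ (t v).card
      · have hsub : ∀ v ∈ S, t v ⊆ S.biUnion t := fun v hv => subset_biUnion_of_mem t hv
        have h1 : ∀ v ∈ S, (S.biUnion t).filter (fun w => w ∈ t v) = t v := by
          intro v hv
          ext w
          simp only [mem_filter]
          exact ⟨fun h => h.2, fun h => ⟨hsub v hv h, h⟩⟩
        have hcalc : ∑ v ∈ S, (t v).card ≤ 2 * (S.biUnion t).card := by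
          calc ∑ v ∈ S, (t v).card
              = ∑ v ∈ S, ((S.biUnion t).filter (fun w => w ∈ t v)).card := by
                refine sum_congr rfl fun v hv => ?_
                rw [h1 v hv]
            _ = ∑ v ∈ S, ∑ w ∈ S.biUnion t, if w ∈ t v then 1 else 0 := by
                refine sum_congr rfl fun v hv => ?_
                rw [Finset.card_filter]
            _ = ∑ w ∈ S.biUnion t, ∑ v ∈ S, if w ∈ t v then 1 else 0 := Finset.sum_comm
            _ = ∑ w ∈ S.biUnion t, (S.filter (fun v => w ∈ t v)).card := by
                refine sum_congr rfl fun w hw => ?_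
                rw [Finset.card_filter]
            _ ≤ ∑ _w ∈ S.biUnion t, 2 := by
                refine sum_le_sum fun w hw => ?_
                obtain ⟨v0, hv0, hwt⟩ := mem_biUnion.1 hw
                obtain ⟨p, hp2, rfl⟩ := hNLpair (mem_filter.1 hwt).1
                calc (S.filter fun v => monoOf p ∈ t v).card ≤ p.card := by
                      apply card_le_card
                      intro v hv
                      have h3 := (mem_filter.1 (mem_filter.1 hv).2).2
                      exact monoOf_mem_iff.1 h3
                  _ = 2 := hp2
            _ = 2 * (S.biUnion t).card := by rw [sum_const, smul_eq_mul, mul_comm]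
        have h2 : 2 * S.card ≤ ∑ v ∈ S, (t v).card := by
          calc 2 * S.card = ∑ _v ∈ S, 2 := by rw [sum_const, smul_eq_mul, mul_comm]
            _ ≤ _ := sum_le_sum hmin
        omega
      · push_neg at hmin
        obtain ⟨v, hvS, hvlt⟩ := hmin
        have hvU := hS hvS
        obtain ⟨hv1, hv2⟩ := hUmem hvU
        obtain ⟨c, hc⟩ := hext _ hv1 (by rw [mdeg_single]; omega)
        have hcv : c ≠ v := by
          rintro rfl
          rw [single_add_self] at hc
          exact hv2 hc
        set w0 : Fin s → ℕ := Pi.single v 1 + Pi.single c 1 with hw0def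
        have hw0A : w0 ∈ A := hc
        have hw0v : w0 v = 1 := by
          simp [hw0def, Pi.single_apply, hcv]
        have hw0deg : mdeg w0 = 2 := by
          rw [hw0def, mdeg_add, mdeg_single, mdeg_single]
        have hw0nl : w0 ∈ nonloops := by
          rw [hNLdef, mem_filter, hD2, mem_filter]
          exact ⟨⟨hw0A, hw0deg⟩, not_eq_single_two hw0v⟩
        have hw0t : w0 ∈ t v := mem_filter.2 ⟨hw0nl, by rw [hw0v]; omega⟩
        have htveq : t v = {w0} := by
          have hcard1 : (t v).card = 1 := by
            have := Finset.card_pos.2 ⟨w0, hw0t⟩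
            omega
          obtain ⟨w', hw'⟩ := card_eq_one.1 hcard1
          rw [hw'] at hw0t ⊢
          rw [mem_singleton] at hw0t
          rw [hw0t]
        obtain ⟨d, hd⟩ := hext _ hw0A (by omega)
        have hdnv : d ≠ v := by
          intro hdv
          apply hv2
          apply hdc _ hd
          rw [single_le_iff, hdv]
          simp only [Pi.add_apply]
          simp [hw0v]
        have hdeq : d = c := by
          by_contra hdne
          have hle : (Pi.single v 1 + Pi.single d 1 : Fin s → ℕ) ≤ w0 + Pi.single d 1 := by
            intro j
            simp only [Pi.add_apply]
            have h5 : (Pi.single v 1 : Fin s → ℕ) j ≤ w0 j := by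
              rw [hw0def]
              exact Nat.le_add_right _ _
            omega
          have hw1A : (Pi.single v 1 + Pi.single d 1 : Fin s → ℕ) ∈ A := hdc _ hd _ hle
          have hw1v : (Pi.single v 1 + Pi.single d 1 : Fin s → ℕ) v = 1 := by
            simp [Pi.single_apply, hdnv]
          have hw1nl : (Pi.single v 1 + Pi.single d 1 : Fin s → ℕ) ∈ nonloops := by
            rw [hNLdef, mem_filter, hD2, mem_filter]
            refine ⟨⟨hw1A, by rw [mdeg_add, mdeg_single, mdeg_single]⟩, not_eq_single_two hw1v⟩
          have hw1t : (Pi.single v 1 + Pi.single d 1 : Fin s → ℕ) ∈ t v :=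
            mem_filter.2 ⟨hw1nl, by rw [hw1v]; omega⟩
          rw [htveq, mem_singleton] at hw1t
          have h6 := congrFun hw1t c
          have hcd : c ≠ d := fun hh => hdne hh.symm
          simp [hw0def, Pi.single_apply, hcv, hcd] at h6
        subst hdeq
        have hcl : Pi.single d 2 ∈ A := by
          apply hdc _ hd
          rw [single_le_iff]
          simp only [Pi.add_apply]
          have h7 : w0 d = 1 := by
            simp [hw0def, Pi.single_apply, hcv]
          simp [h7]
        have hcU : d ∉ U := fun hcu => (hUmem hcu).2 hcl
        have hss : S.erase v ⊂ S := Finset.erase_ssubset hvS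
        have hih := ih _ hss ((erase_subset _ _).trans hS)
        have hbi : S.biUnion t = insert w0 ((S.erase v).biUnion t) := by
          conv_lhs => rw [← Finset.insert_erase hvS]
          rw [Finset.biUnion_insert, htveq, ← Finset.insert_eq]
        have hnm : w0 ∉ (S.erase v).biUnion t := by
          intro hmem
          obtain ⟨x', hx', hwx'⟩ := mem_biUnion.1 hmem
          have hxne : w0 x' ≠ 0 := (mem_filter.1 hwx').2
          have h8 : x' = v ∨ x' = d := by
            by_contra hcon
            push_neg at hcon
            apply hxne
            simp [hw0def, Pi.single_apply, hcon.1, hcon.2]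
          rcases h8 with rfl | rfl
          · exact (Finset.ne_of_mem_erase hx') rfl
          · exact hcU (hS (Finset.mem_of_mem_erase hx'))
        rw [hbi, card_insert_of_notMem hnm]
        have h9 := Finset.card_erase_add_one hvS
        omega
  have hallsub : ∀ S : Finset {i // i ∈ U}, S.card ≤ (S.biUnion (fun u => t u.1)).card := by
    intro S
    have hSU : S.image Subtype.val ⊆ U := by
      intro i hi
      obtain ⟨u, hu, rfl⟩ := mem_image.1 hi
      exact u.2
    have h1 := hall_cond _ hSU
    rw [Finset.card_image_of_injective _ Subtype.val_injective] at h1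
    have h2 : (S.image Subtype.val).biUnion t = S.biUnion (fun u => t u.1) := by
      ext w
      simp only [mem_biUnion, mem_image]
      constructor
      · rintro ⟨i, ⟨u, hu, rfl⟩, hw⟩
        exact ⟨u, hu, hw⟩
      · rintro ⟨u, hu, hw⟩
        exact ⟨u.1, ⟨u, hu, rfl⟩, hw⟩
    rw [h2] at h1
    exact h1
  obtain ⟨f, hfinj, hft⟩ :=
    (Finset.all_card_le_biUnion_card_iff_existsInjective'
      (fun u : {i // i ∈ U} => t u.1)).1 hallsub
  have hsurj : ∀ w ∈ nonloops, ∃ u : {i // i ∈ U}, f u = w := by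
    have himg : U.attach.image f = nonloops := by
      apply eq_of_subset_of_card_le
      · intro w hw
        obtain ⟨u, hu, rfl⟩ := mem_image.1 hw
        exact (mem_filter.1 (hft u)).1
      · rw [card_image_of_injective _ hfinj, card_attach]
        omega
    intro w hw
    rw [← himg] at hw
    obtain ⟨u, _, hu⟩ := mem_image.1 hw
    exact ⟨u, hu⟩
  have hcard3 : ({x, y, z} : Finset (Fin s)).card = 3 := by
    rw [card_insert_of_notMem (by simp [hxy, hxz]),
      card_insert_of_notMem (by simp [hyz]), card_singleton]
  obtain ⟨d, hd⟩ := hext _ htri (by rw [mdeg_monoOf, hcard3])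
  set K := insert d ({x, y, z} : Finset (Fin s)) with hKdef
  have hmKle : monoOf K ≤ monoOf {x, y, z} + Pi.single d 1 := by
    intro j
    by_cases hjK : j ∈ K
    · rcases mem_insert.1 hjK with rfl | hj3
      · simp only [Pi.add_apply]
        have h2 : monoOf K j = 1 := by simp [monoOf, hjK]
        have h3 : (Pi.single j 1 : Fin s → ℕ) j = 1 := by simp
        omega
      · simp only [Pi.add_apply]
        have h2 : monoOf K j = 1 := by simp [monoOf, hjK]
        have h3 : monoOf {x, y, z} j = 1 := by simp [monoOf, hj3]
        omega
    · simp [monoOf, hjK]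
  have hKA : monoOf K ∈ A := hdc _ hd _ hmKle
  have hpairs : ∀ p ∈ K.powersetCard 2, monoOf p ∈ nonloops := by
    intro p hp
    obtain ⟨hpK, hp2⟩ := mem_powersetCard.1 hp
    obtain ⟨i, j, hij, rfl⟩ := card_eq_two.1 hp2
    refine mem_filter.2 ⟨mem_filter.2 ⟨hdc _ hKA _ (monoOf_mono hpK), ?_⟩, ?_⟩
    · rw [mdeg_monoOf, card_insert_of_notMem (by simp [hij]), card_singleton]
    · apply not_eq_single_two (v := i)
      simp [monoOf]
  have hex : ∀ p ∈ K.powersetCard 2, ∃ u : {i // i ∈ U}, f u = monoOf p :=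
    fun p hp => hsurj _ (hpairs p hp)
  set Φ : Finset (Fin s) → Fin s :=
    fun p => if h : ∃ u : {i // i ∈ U}, f u = monoOf p then h.choose.1 else x with hΦdef
  have hΦmem : ∀ p ∈ K.powersetCard 2, Φ p ∈ p ∧ Φ p ∈ U := by
    intro p hp
    have h := hex p hp
    simp only [hΦdef, dif_pos h]
    refine ⟨?_, h.choose.2⟩
    have hc := h.choose_spec
    have h1 := hft h.choose
    rw [hc] at h1
    exact monoOf_mem_iff.1 (mem_filter.1 h1).2
  have hΦinj : Set.InjOn Φ (K.powersetCard 2) := by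
    intro p hp p' hp' heq
    have h := hex p (by simpa using hp)
    have h' := hex p' (by simpa using hp')
    rw [hΦdef] at heq
    simp only [dif_pos h, dif_pos h'] at heq
    have hch : h.choose = h'.choose := Subtype.ext heq
    have h2 : monoOf p = monoOf p' := by rw [← h.choose_spec, ← h'.choose_spec, hch]
    exact monoOf_inj h2
  have hcardle : (K.powersetCard 2).card ≤ (K.filter (fun i => i ∈ U)).card := by
    apply card_le_card_of_injOn Φ
    · intro p hp
      obtain ⟨h1, h2⟩ := hΦmem p hp
      exact mem_filter.2 ⟨(mem_powersetCard.1 hp).1 h1, h2⟩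
    · exact hΦinj
  rw [card_powersetCard] at hcardle
  by_cases hdK : d ∈ ({x, y, z} : Finset (Fin s))
  · have hK3 : K = {x, y, z} := insert_eq_self.2 hdK
    have hld : Pi.single d 2 ∈ A := by
      apply hdc _ hd
      rw [single_le_iff]
      simp only [Pi.add_apply]
      have h1 : monoOf {x, y, z} d = 1 := by simp [monoOf, hdK]
      have h2 : (Pi.single d 1 : Fin s → ℕ) d = 1 := by simp
      omega
    have hdU : d ∉ U := fun hcu => (hUmem hcu).2 hld
    have hsubE : K.filter (fun i => i ∈ U) ⊆ K.erase d := by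
      intro i hi
      obtain ⟨hiK, hiU⟩ := mem_filter.1 hi
      exact mem_erase.2 ⟨fun hh => hdU (hh ▸ hiU), hiK⟩
    have h5 := card_le_card hsubE
    have h6 : (K.erase d).card = 2 := by
      rw [card_erase_of_mem (by rw [hKdef]; exact mem_insert_self _ _), hK3, hcard3]
    have h7 : K.card = 3 := by rw [hK3, hcard3]
    rw [h7] at hcardle
    have h8 : Nat.choose 3 2 = 3 := by decide
    omega
  · have hK4 : K.card = 4 := by rw [hKdef, card_insert_of_notMem hdK, hcard3]
    have h5 := card_le_card (filter_subset (fun i => i ∈ U) K)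
    rw [hK4] at hcardle
    have h8 : Nat.choose 4 2 = 6 := by decide
    omega

end Stmt3Aux

open Finset Stmt3Aux in
/-- For `n ≥ 4` and `2b < a`, the sequence `(1, a, a, ..., a, b)` of length
`n+1` is not a pure O-sequence. -/
theorem stmt_3 (n a b : ℕ) (hn : 4 ≤ n) (ha : 0 < a) (hb : 0 < b) (hab : 2 * b < a) :
    ¬ IsPureOSequence (1 :: (List.replicate (n - 1) a ++ [b])) := by
  rintro ⟨s, A, ⟨hne, hdc⟩, hpure, hvec⟩
  classical
  set L := (1 : ℕ) :: (List.replicate (n - 1) a ++ [b]) with hLdef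
  have hLlen : L.length = n + 1 := by
    simp [hLdef]
    omega
  have hT : topDegree A = n := by
    have h1 := congrArg List.length hvec
    simp only [hVector, List.length_map, List.length_range] at h1
    rw [hLlen] at h1
    omega
  have hget : ∀ i (hi : i < n + 1), hVec A i = L[i]'(lt_of_lt_of_eq hi hLlen.symm) := by
    intro i hi
    have h2 : i < (hVector A).length := by
      simp only [hVector, List.length_map, List.length_range, hT]
      omega
    have h3 : (hVector A)[i]'h2 = hVec A i := by
      simp [hVector]
    rw [← h3]
    exact List.getElem_of_eq hvec h2
  have hmid : ∀ i, 1 ≤ i → i ≤ n - 1 → hVec A i = a := by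
    intro i h1 h2
    rw [hget i (by omega)]
    obtain ⟨j, rfl⟩ : ∃ j, i = j + 1 := ⟨i - 1, by omega⟩
    rw [List.getElem_cons_succ]
    rw [List.getElem_append_left (by simp only [List.length_replicate]; omega)]
    simp
  have hvn : hVec A n = b := by
    rw [hget n (by omega)]
    obtain ⟨j, hj⟩ : ∃ j, n = j + 1 := ⟨n - 1, by omega⟩
    subst hj
    rw [List.getElem_cons_succ]
    rw [List.getElem_append_right (by simp only [List.length_replicate]; omega)]
    simp
  have hmax_above : ∀ u ∈ A, ∃ m, IsMaximalIn A m ∧ u ≤ m := by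
    intro u hu
    obtain ⟨m, hm, hmax⟩ := Set.Finite.exists_maximalFor id {v | v ∈ A ∧ u ≤ v}
      (Set.Finite.subset A.finite_toSet (fun v hv => hv.1)) ⟨u, hu, le_refl u⟩
    exact ⟨m, ⟨hm.1, fun v hv hmv => le_antisymm (hmax ⟨hv, hm.2.trans hmv⟩ hmv) hmv⟩, hm.2⟩
  have hmaxdeg : ∀ m, IsMaximalIn A m → mdeg m = n := by
    have hAn : ∃ v ∈ A, mdeg v = n := by
      have hcb : (A.filter fun u => mdeg u = n).card = b := hvn
      have hpos : 0 < (A.filter fun u => mdeg u = n).card := by omega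
      obtain ⟨v, hv⟩ := card_pos.1 hpos
      have h0 := mem_filter.1 hv
      exact ⟨v, h0.1, h0.2⟩
    obtain ⟨v0, hv0A, hv0d⟩ := hAn
    obtain ⟨m0, hm0, hv0m⟩ := hmax_above v0 hv0A
    have hle : mdeg m0 ≤ n := by
      rw [← hT]
      exact Finset.le_sup (f := mdeg) hm0.1
    have hge : n ≤ mdeg m0 := hv0d ▸ mdeg_mono hv0m
    intro m hm
    rw [hpure m m0 hm hm0]
    omega
  have hext : ∀ u ∈ A, mdeg u < n →
      ∃ i, u + Pi.single i 1 ∈ A ∧ mdeg (u + Pi.single i 1) = mdeg u + 1 := by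
    intro u hu hlt
    obtain ⟨m, hm, hum⟩ := hmax_above u hu
    have hmd : mdeg m = n := hmaxdeg m hm
    have hex2 : ∃ i, u i < m i := by
      by_contra hcon
      push_neg at hcon
      have : mdeg m ≤ mdeg u := Finset.sum_le_sum fun i _ => hcon i
      omega
    obtain ⟨i, hi⟩ := hex2
    refine ⟨i, hdc m hm.1 _ ?_, by rw [mdeg_add, mdeg_single]⟩
    intro j
    rcases eq_or_ne j i with rfl | hj
    · simp only [Pi.add_apply, Pi.single_eq_same]
      omega
    · simp only [Pi.add_apply, Pi.single_apply, if_neg hj, add_zero]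
      exact hum j
  have hsupp : ∀ u ∈ A, (msupp u).card ≤ 2 := by
    intro u hu
    by_contra hcon
    push_neg at hcon
    obtain ⟨V3, hV3sub, hV3card⟩ := Finset.exists_subset_card_eq
      (show 3 ≤ (msupp u).card by omega)
    obtain ⟨x, y, z, hxy, hxz, hyz, rfl⟩ := Finset.card_eq_three.1 hV3card
    refine no_triangle A hdc ?_ ?_ hxy hxz hyz ?_
    · intro w hw hwd
      obtain ⟨i, hi, _⟩ := hext w hw (by omega)
      exact ⟨i, hi⟩
    · have e1 : hVec A 1 = a := hmid 1 (by omega) (by omega)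
      have e2 : hVec A 2 = a := hmid 2 (by omega) (by omega)
      show hVec A 1 = hVec A 2
      omega
    · exact hdc u hu _ (monoOf_le fun j hj => mem_msupp.1 (hV3sub hj))
  set Dn := A.filter (fun u => mdeg u = n) with hDn
  set Dn1 := A.filter (fun u => mdeg u = n - 1) with hDn1
  have hsub : Dn1 ⊆ Dn.biUnion
      (fun v => (msupp v).image (fun i => fun j => v j - (Pi.single i 1 : Fin s → ℕ) j)) := by
    intro u hu
    obtain ⟨huA, hud⟩ := mem_filter.1 hu
    obtain ⟨i, hiA, hideg⟩ := hext u huA (by omega)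
    rw [mem_biUnion]
    refine ⟨u + Pi.single i 1, mem_filter.2 ⟨hiA, by omega⟩, ?_⟩
    rw [mem_image]
    refine ⟨i, ?_, ?_⟩
    · rw [mem_msupp]
      simp only [Pi.add_apply, Pi.single_eq_same]
      omega
    · funext j
      simp only [Pi.add_apply]
      omega
  have hcount : Dn1.card ≤ 2 * Dn.card := by
    calc Dn1.card ≤ (Dn.biUnion
        (fun v => (msupp v).image (fun i => fun j => v j - (Pi.single i 1 : Fin s → ℕ) j))).card :=
          card_le_card hsub
      _ ≤ ∑ v ∈ Dn, ((msupp v).image (fun i => fun j => v j - (Pi.single i 1 : Fin s → ℕ) j)).card :=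
          card_biUnion_le
      _ ≤ ∑ _v ∈ Dn, 2 := by
          refine sum_le_sum fun v hv => ?_
          exact le_trans Finset.card_image_le (hsupp v (mem_filter.1 hv).1)
      _ = 2 * Dn.card := by rw [sum_const, smul_eq_mul, mul_comm]
  have e3 : Dn1.card = a := hmid (n - 1) (by omega) (le_refl _)
  have e4 : Dn.card = b := hvn
  omega
end

section
/- Let a and b be positive integers. The sequence (1, a, b) is a pure O-sequence if and only if ⌈a/2⌉ ≤ b ≤ a(a+1)/2. -/
/-- triangular numbers -/
def triN (n : ℕ) : ℕ := n * (n + 1) / 2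

lemma triN_succ (n : ℕ) : triN (n + 1) = triN n + (n + 1) := by
  unfold triN
  have h : (n + 1) * (n + 1 + 1) = n * (n + 1) + (n + 1) * 2 := by ring
  rw [h, Nat.add_mul_div_right _ _ (by norm_num : (0:ℕ) < 2)]

lemma triN_strictMono : StrictMono triN :=
  strictMono_nat_of_lt_succ (fun n => by rw [triN_succ]; omega)

lemma triN_ge (n : ℕ) : n ≤ triN n := by
  induction n with
  | zero => simp [triN]
  | succ n ih => rw [triN_succ]; omega

lemma enc_inj {i1 j1 i2 j2 : ℕ} (h1 : i1 ≤ j1) (h2 : i2 ≤ j2)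
    (h : triN j1 + i1 = triN j2 + i2) : i1 = i2 ∧ j1 = j2 := by
  have key : ∀ i j i' j' : ℕ, i ≤ j → i' ≤ j' → j < j' → triN j + i < triN j' + i' := by
    intro i j i' j' hij hij' hjj
    have := triN_strictMono.le_iff_le.mpr (Nat.succ_le_of_lt hjj)
    rw [triN_succ] at this
    omega
  rcases lt_trichotomy j1 j2 with h' | h' | h'
  · exact absurd h (Nat.ne_of_lt (key _ _ _ _ h1 h2 h'))
  · subst h'; omega
  · exact absurd h.symm (Nat.ne_of_lt (key _ _ _ _ h2 h1 h'))

lemma enc_lt {i j a : ℕ} (hij : i ≤ j) (hja : j < a) : triN j + i < triN a := by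
  have h1 : triN (j + 1) ≤ triN a := triN_strictMono.le_iff_le.mpr hja
  rw [triN_succ] at h1; omega

/-- unit monomial -/
def e1 {s : ℕ} (i : Fin s) : Fin s → ℕ := fun k => if k = i then 1 else 0

/-- pair monomial -/
def pm {s : ℕ} (i j : Fin s) : Fin s → ℕ := fun k => e1 i k + e1 j k

lemma mdeg_e1 {s : ℕ} (i : Fin s) : mdeg (e1 i) = 1 := by
  simp [mdeg, e1]

lemma mdeg_pm {s : ℕ} (i j : Fin s) : mdeg (pm i j) = 2 := by
  simp [mdeg, pm, e1, Finset.sum_add_distrib]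

lemma e1_le_pm_left {s : ℕ} (i j : Fin s) : e1 i ≤ pm i j := fun k => Nat.le_add_right _ _

lemma e1_le_pm_right {s : ℕ} (i j : Fin s) : e1 j ≤ pm i j := fun k => Nat.le_add_left _ _

lemma e1_inj {s : ℕ} : Function.Injective (e1 (s := s)) := by
  intro i j h
  have := congrFun h i
  simp [e1] at this
  by_contra hne
  simp [Ne.symm hne, hne] at this

lemma pm_comm {s : ℕ} (i j : Fin s) : pm i j = pm j i := by
  funext k; simp [pm]; omega

lemma pm_pos_iff {s : ℕ} (i j k : Fin s) : 0 < pm i j k ↔ k = i ∨ k = j := by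
  simp [pm, e1]
  split_ifs <;> simp_all

lemma mdeg_eq_zero {s : ℕ} {u : Fin s → ℕ} (h : mdeg u = 0) : u = 0 := by
  funext k
  have := Finset.sum_eq_zero_iff.mp h k (Finset.mem_univ k)
  simpa using this

lemma mdeg_eq_one {s : ℕ} {u : Fin s → ℕ} (h : mdeg u = 1) : ∃ i, u = e1 i := by
  have hpos : ∃ i, 0 < u i := by
    by_contra hc
    push_neg at hc
    have : mdeg u = 0 := Finset.sum_eq_zero (fun i _ => Nat.le_zero.mp (hc i))
    omega
  obtain ⟨i, hi⟩ := hpos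
  refine ⟨i, funext fun k => ?_⟩
  have hsplit := Finset.add_sum_erase Finset.univ u (Finset.mem_univ i)
  rw [mdeg] at h
  have hz : ∑ k ∈ Finset.univ.erase i, u k = 0 := by omega
  by_cases hk : k = i
  · subst hk; simp [e1]; omega
  · have := Finset.sum_eq_zero_iff.mp hz k (Finset.mem_erase.mpr ⟨hk, Finset.mem_univ k⟩)
    simp [e1, hk, this]

lemma mdeg_eq_two {s : ℕ} {u : Fin s → ℕ} (h : mdeg u = 2) :
    ∃ i j, i ≤ j ∧ u = pm i j := by
  have hpos : ∃ i, 0 < u i := by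
    by_contra hc
    push_neg at hc
    have : mdeg u = 0 := Finset.sum_eq_zero (fun i _ => Nat.le_zero.mp (hc i))
    omega
  obtain ⟨i, hi⟩ := hpos
  set u' : Fin s → ℕ := fun k => u k - e1 i k with hu'
  have hle : ∀ k, e1 i k ≤ u k := by
    intro k
    by_cases hk : k = i
    · subst hk; simp [e1]; omega
    · simp [e1, hk]
  have hmd : mdeg u' = 1 := by
    have : ∀ k ∈ Finset.univ, u' k + e1 i k = u k := fun k _ => Nat.sub_add_cancel (hle k)
    have hsum : mdeg u' + mdeg (e1 i) = mdeg u := by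
      rw [mdeg, mdeg, mdeg, ← Finset.sum_add_distrib]
      exact Finset.sum_congr rfl this
    have he : mdeg (e1 (s := s) i) = 1 := by simp [mdeg, e1]
    omega
  obtain ⟨j, hj⟩ := mdeg_eq_one hmd
  have hu : u = pm i j := by
    funext k
    have h1 : u k - e1 i k = e1 j k := congrFun hj k
    have h2 := hle k
    simp only [pm]
    omega
  rcases le_total i j with hij | hij
  · exact ⟨i, j, hij, hu⟩
  · exact ⟨j, i, hij, by rw [hu, pm_comm]⟩

lemma pm_inj {s : ℕ} {i1 j1 i2 j2 : Fin s} (h1 : i1 ≤ j1) (h2 : i2 ≤ j2)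
    (h : pm i1 j1 = pm i2 j2) : i1 = i2 ∧ j1 = j2 := by
  have pos : ∀ i j : Fin s, 0 < pm i j i ∧ 0 < pm i j j := by
    intro i j
    constructor <;> rw [pm_pos_iff] <;> simp
  have hi : i1 = i2 := by
    have p1 : 0 < pm i2 j2 i1 := h ▸ (pos i1 j1).1
    have p2 : 0 < pm i1 j1 i2 := h ▸ (pos i2 j2).1
    rw [pm_pos_iff] at p1 p2
    rcases p1 with h' | h' <;> rcases p2 with h'' | h''  <;>
      first | exact h' | exact h''.symm |
      (exact le_antisymm (le_of_le_of_eq h1 h''.symm) (le_of_le_of_eq h2 h'.symm))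
  subst hi
  refine ⟨rfl, ?_⟩
  have p1 : 0 < pm i1 j2 j1 := h ▸ (pos i1 j1).2
  have p2 : 0 < pm i1 j1 j2 := h ▸ (pos i1 j2).2
  rw [pm_pos_iff] at p1 p2
  rcases p1 with h' | h'
  · rcases p2 with h'' | h''
    · rw [h', h'']
    · exact h''.symm
  · exact h'

lemma le_of_le_mdeg_eq {s : ℕ} {u v : Fin s → ℕ} (hle : v ≤ u) (hd : mdeg u ≤ mdeg v) :
    v = u := by
  by_contra hne
  have : ∃ k, v k ≠ u k := Function.ne_iff.mp hne
  obtain ⟨k, hk⟩ := this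
  have : mdeg v < mdeg u :=
    Finset.sum_lt_sum (fun i _ => hle i) ⟨k, Finset.mem_univ k, lt_of_le_of_ne (hle k) hk⟩
  omega

lemma mdeg_mono {s : ℕ} {u v : Fin s → ℕ} (h : u ≤ v) : mdeg u ≤ mdeg v :=
  Finset.sum_le_sum (fun i _ => h i)

/-- inverse of triangular: largest j with triN j ≤ n -/
def invT (n : ℕ) : ℕ := Nat.findGreatest (fun j => triN j ≤ n) n

lemma invT_le (n : ℕ) : triN (invT n) ≤ n :=
  Nat.findGreatest_spec (P := fun j => triN j ≤ n) (Nat.zero_le n) (by simp [triN])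

lemma invT_enc {i j : ℕ} (hij : i ≤ j) : invT (triN j + i) = j := by
  set n := triN j + i with hn
  have h1 : j ≤ invT n :=
    Nat.le_findGreatest (le_trans (triN_ge j) (by omega)) (by omega)
  have h2 : invT n ≤ j := by
    by_contra hc
    push_neg at hc
    have hP : triN (invT n) ≤ n :=
      Nat.findGreatest_spec (P := fun j => triN j ≤ n) (Nat.zero_le n) (by simp [triN])
    have : triN (j + 1) ≤ triN (invT n) := triN_strictMono.le_iff_le.mpr hc
    rw [triN_succ] at this
    omega
  omega

lemma invT_lt {n a : ℕ} (h : n < triN a) : invT n < a := by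
  have := invT_le n
  by_contra hc
  push_neg at hc
  have := triN_strictMono.le_iff_le.mpr hc
  omega

lemma invT_split (n : ℕ) : n - triN (invT n) ≤ invT n ∧ triN (invT n) + (n - triN (invT n)) = n := by
  have h1 := invT_le n
  have h2 : n < triN (invT n + 1) := by
    by_contra hc
    push_neg at hc
    have : invT n + 1 ≤ invT n := Nat.le_findGreatest (le_trans (triN_ge _) hc) hc
    omega
  rw [triN_succ] at h2
  omega

lemma exists_maximal_above {s : ℕ} {A : Finset (Fin s → ℕ)} {u : Fin s → ℕ} (hu : u ∈ A) :
    ∃ m, u ≤ m ∧ IsMaximalIn A m := by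
  classical
  obtain ⟨m, hm, hmax⟩ := Set.Finite.exists_maximalFor id
    (↑(A.filter (fun v => u ≤ v)) : Set _) (A.filter (fun v => u ≤ v)).finite_toSet
    ⟨u, by simp [hu]⟩
  simp only [Finset.mem_coe, Finset.mem_filter, id] at hm hmax
  refine ⟨m, hm.2, hm.1, fun v hv hmv => ?_⟩
  exact le_antisymm (hmax ⟨hv, le_trans hm.2 hmv⟩ hmv) hmv

/-- rank of an element within a finset of `Fin s` -/
def rk {s : ℕ} (I : Finset (Fin s)) (i : Fin s) : ℕ := (I.filter (fun j => j < i)).card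

lemma rk_lt_card {s : ℕ} {I : Finset (Fin s)} {i : Fin s} (hi : i ∈ I) : rk I i < I.card :=
  Finset.card_lt_card ((Finset.ssubset_iff_of_subset (Finset.filter_subset _ _)).mpr
    ⟨i, hi, by simp⟩)

lemma rk_mono {s : ℕ} {I : Finset (Fin s)} {i j : Fin s} (h : i ≤ j) : rk I i ≤ rk I j :=
  Finset.card_le_card (Finset.filter_subset_filter _ (by rfl) |>.trans
    (Finset.monotone_filter_right I (fun k _ hk => lt_of_lt_of_le hk h)))

lemma rk_strict {s : ℕ} {I : Finset (Fin s)} {i j : Fin s} (hi : i ∈ I) (h : i < j) :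
    rk I i < rk I j := by
  apply Finset.card_lt_card
  rw [Finset.ssubset_iff_of_subset
    (Finset.monotone_filter_right I (fun k _ hk => lt_trans hk h))]
  exact ⟨i, Finset.mem_filter.mpr ⟨hi, h⟩, by simp⟩

lemma rk_injOn {s : ℕ} {I : Finset (Fin s)} {i j : Fin s} (hi : i ∈ I) (hj : j ∈ I)
    (h : rk I i = rk I j) : i = j := by
  rcases lt_trichotomy i j with h' | h' | h'
  · exact absurd h (Nat.ne_of_lt (rk_strict hi h'))
  · exact h'
  · exact absurd h.symm (Nat.ne_of_lt (rk_strict hj h'))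

lemma forward {a b : ℕ} (hb : 0 < b) (h : IsPureOSequence [1, a, b]) :
    (a + 1) / 2 ≤ b ∧ b ≤ a * (a + 1) / 2 := by
  classical
  obtain ⟨s, A, hOI, hP, hHV⟩ := h
  have hlen : topDegree A = 2 := by
    have := congrArg List.length hHV
    simp [hVector] at this
    omega
  have hHV' : [hVec A 0, hVec A 1, hVec A 2] = [1, a, b] := by
    rw [hVector, hlen] at hHV
    exact hHV
  simp only [List.cons.injEq, and_true] at hHV'
  obtain ⟨h0, h1, h2⟩ := hHV'
  set A1 := A.filter (fun u => mdeg u = 1) with hA1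
  set A2 := A.filter (fun u => mdeg u = 2) with hA2
  have hcard1 : A1.card = a := h1
  have hcard2 : A2.card = b := h2
  -- every maximal element has degree 2
  have hmax2 : ∀ m, IsMaximalIn A m → mdeg m = 2 := by
    obtain ⟨w, hw, hwd⟩ := Finset.exists_mem_eq_sup A hOI.1 mdeg
    obtain ⟨m', hm'1, hm'2⟩ := exists_maximal_above hw
    have hd1 : mdeg m' ≤ 2 := by
      have := Finset.le_sup (f := mdeg) hm'2.1
      rw [← topDegree, hlen] at this
      exact this
    have hd2 : 2 ≤ mdeg m' := by
      have := mdeg_mono hm'1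
      rw [← hwd, ← topDegree, hlen] at this
      exact this
    intro m hm
    rw [hP m m' hm hm'2]
    omega
  -- lower bound
  have hcov : ∀ u ∈ A1, ∃ w, w ∈ A2 ∧ u ≤ w := by
    intro u hu
    rw [hA1, Finset.mem_filter] at hu
    obtain ⟨m, hum, hmmax⟩ := exists_maximal_above hu.1
    exact ⟨m, Finset.mem_filter.mpr ⟨hmmax.1, hmax2 m hmmax⟩, hum⟩
  choose! f hf1 hf2 using hcov
  have hlow : A1.card ≤ 2 * A2.card := by
    apply Finset.card_le_mul_card_image_of_maps_to hf1
    intro w hw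
    have hw2 : mdeg w = 2 := (Finset.mem_filter.mp hw).2
    obtain ⟨i, j, hij, hwp⟩ := mdeg_eq_two hw2
    have hsub : A1.filter (fun u => f u = w) ⊆ {e1 i, e1 j} := by
      intro u hu
      rw [Finset.mem_filter] at hu
      obtain ⟨hu1, hufw⟩ := hu
      have hud : mdeg u = 1 := (Finset.mem_filter.mp hu1).2
      obtain ⟨k, rfl⟩ := mdeg_eq_one hud
      have hle : e1 k ≤ w := hufw ▸ hf2 _ hu1
      have hpos : 0 < pm i j k := by
        rw [← hwp]
        exact lt_of_lt_of_le (by simp [e1]) (hle k)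
      rw [pm_pos_iff] at hpos
      rcases hpos with rfl | rfl <;> simp
    exact (Finset.card_le_card hsub).trans ((Finset.card_insert_le _ _).trans (by simp))
  -- upper bound
  set I := Finset.univ.filter (fun i : Fin s => e1 i ∈ A) with hI
  have hIcard : I.card = a := by
    have himg : I.image e1 = A1 := by
      apply Finset.Subset.antisymm
      · intro u hu
        obtain ⟨i, hi, rfl⟩ := Finset.mem_image.mp hu
        rw [hI, Finset.mem_filter] at hi
        exact Finset.mem_filter.mpr ⟨hi.2, mdeg_e1 i⟩
      · intro u hu
        rw [hA1, Finset.mem_filter] at hu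
        obtain ⟨i, rfl⟩ := mdeg_eq_one hu.2
        exact Finset.mem_image_of_mem _ (by simp [hI, hu.1])
    rw [← hcard1, ← himg, Finset.card_image_of_injective _ e1_inj]
  have hA2ne : A2.Nonempty := Finset.card_pos.mp (by omega)
  obtain ⟨w0, hw0⟩ := hA2ne
  have hs : 0 < s := by
    rcases Nat.eq_zero_or_pos s with rfl | hs
    · have : mdeg w0 = 2 := (Finset.mem_filter.mp hw0).2
      simp [mdeg] at this
    · exact hs
  have hne : Nonempty (Fin s) := ⟨⟨0, hs⟩⟩
  have hrep : ∀ w ∈ A2, ∃ p : Fin s × Fin s, p.1 ≤ p.2 ∧ w = pm p.1 p.2 := by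
    intro w hw
    obtain ⟨i, j, hij, hwp⟩ := mdeg_eq_two (Finset.mem_filter.mp hw).2
    exact ⟨(i, j), hij, hwp⟩
  choose! pr hple hpw using hrep
  have hmemI : ∀ w ∈ A2, (pr w).1 ∈ I ∧ (pr w).2 ∈ I := by
    intro w hw
    have hwA : w ∈ A := (Finset.mem_filter.mp hw).1
    constructor <;> rw [hI, Finset.mem_filter] <;> refine ⟨Finset.mem_univ _, ?_⟩
    · exact hOI.2 w hwA _ (le_of_le_of_eq (e1_le_pm_left _ _) (hpw w hw).symm)
    · exact hOI.2 w hwA _ (le_of_le_of_eq (e1_le_pm_right _ _) (hpw w hw).symm)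
  have hup : A2.card ≤ (Finset.range (triN a)).card := by
    apply Finset.card_le_card_of_injOn (fun w => triN (rk I (pr w).2) + rk I (pr w).1)
    · intro w hw
      rw [Finset.mem_coe, Finset.mem_range]
      exact enc_lt (rk_mono (hple w hw)) (hIcard ▸ rk_lt_card (hmemI w hw).2)
    · intro w1 hw1 w2 hw2 heq
      simp only [Finset.mem_coe] at hw1 hw2
      obtain ⟨e1eq, e2eq⟩ := enc_inj (rk_mono (hple w1 hw1)) (rk_mono (hple w2 hw2)) heq
      have hi : (pr w1).1 = (pr w2).1 := rk_injOn (hmemI w1 hw1).1 (hmemI w2 hw2).1 e1eq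
      have hj : (pr w1).2 = (pr w2).2 := rk_injOn (hmemI w1 hw1).2 (hmemI w2 hw2).2 e2eq
      rw [hpw w1 hw1, hpw w2 hw2, hi, hj]
  rw [Finset.card_range] at hup
  refine ⟨by omega, by rw [← hcard2]; exact hup⟩

/-- pair monomial given by natural number indices -/
def pmN (s : ℕ) (i j : ℕ) : Fin s → ℕ :=
  fun k => (if (k : ℕ) = i then 1 else 0) + (if (k : ℕ) = j then 1 else 0)

lemma pmN_eq_pm {s : ℕ} {i j : ℕ} (hi : i < s) (hj : j < s) :
    pmN s i j = pm ⟨i, hi⟩ ⟨j, hj⟩ := by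
  funext k
  simp [pmN, pm, e1, Fin.ext_iff]

/-- decoding a natural number `n < triN s` into a pair monomial -/
def decM (s : ℕ) (n : ℕ) : Fin s → ℕ := pmN s (n - triN (invT n)) (invT n)

lemma decM_enc {s : ℕ} {i j : ℕ} (hij : i ≤ j) : decM s (triN j + i) = pmN s i j := by
  rw [decM, invT_enc hij]
  have h : triN j + i - triN j = i := by omega
  rw [h]

lemma backward {a b : ℕ} (ha : 0 < a) (hb : 0 < b) (hab1 : (a + 1) / 2 ≤ b)
    (hab2 : b ≤ a * (a + 1) / 2) : IsPureOSequence [1, a, b] := by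
  classical
  set P : Finset (Fin a → ℕ) := (Finset.range (triN a)).image (decM a) with hPdef
  have hmemP : ∀ i j : ℕ, i ≤ j → j < a → pmN a i j ∈ P := by
    intro i j hij hja
    rw [hPdef]
    exact Finset.mem_image.mpr ⟨triN j + i, Finset.mem_range.mpr (enc_lt hij hja),
      decM_enc hij⟩
  have hPrep : ∀ w ∈ P, ∃ i j : Fin a, i ≤ j ∧ w = pm i j := by
    intro w hw
    obtain ⟨n, hn, rfl⟩ := Finset.mem_image.mp hw
    rw [Finset.mem_range] at hn
    obtain ⟨hij, -⟩ := invT_split n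
    have hja : invT n < a := invT_lt hn
    refine ⟨⟨n - triN (invT n), lt_of_le_of_lt hij hja⟩, ⟨invT n, hja⟩, hij, ?_⟩
    exact pmN_eq_pm _ _
  have hPdeg : ∀ w ∈ P, mdeg w = 2 := by
    intro w hw
    obtain ⟨i, j, -, rfl⟩ := hPrep w hw
    exact mdeg_pm i j
  have hPcard : P.card = triN a := by
    rw [hPdef, Finset.card_image_of_injOn, Finset.card_range]
    intro n1 hn1 n2 hn2 heq
    simp only [Finset.coe_range, Set.mem_Iio] at hn1 hn2
    obtain ⟨hij1, hsplit1⟩ := invT_split n1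
    obtain ⟨hij2, hsplit2⟩ := invT_split n2
    have hja1 : invT n1 < a := invT_lt hn1
    have hja2 : invT n2 < a := invT_lt hn2
    rw [decM, decM, pmN_eq_pm (lt_of_le_of_lt hij1 hja1) hja1,
      pmN_eq_pm (lt_of_le_of_lt hij2 hja2) hja2] at heq
    obtain ⟨hi, hj⟩ := pm_inj hij1 hij2 heq
    rw [Fin.mk.injEq] at hi hj
    rw [hj] at hsplit1 hi
    omega
  -- the covering set
  set M : Finset (Fin a → ℕ) :=
    (Finset.range ((a + 1) / 2)).image (fun m => pmN a (2 * m) (min (2 * m + 1) (a - 1)))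
    with hMdef
  have hMP : M ⊆ P := by
    intro w hw
    rw [hMdef] at hw
    obtain ⟨m, hm, rfl⟩ := Finset.mem_image.mp hw
    rw [Finset.mem_range] at hm
    exact hmemP _ _ (by omega) (by omega)
  have hMcard : M.card ≤ (a + 1) / 2 := le_trans (Finset.card_image_le) (by simp)
  obtain ⟨B, hMB, hBP, hBcard⟩ :=
    Finset.exists_subsuperset_card_eq hMP (le_trans hMcard hab1) (hPcard ▸ hab2)
  have hcov : ∀ k : Fin a, ∃ w ∈ M, e1 k ≤ w := by
    intro k
    refine ⟨pmN a (2 * ((k : ℕ) / 2)) (min (2 * ((k : ℕ) / 2) + 1) (a - 1)),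
      Finset.mem_image.mpr ⟨(k : ℕ) / 2, Finset.mem_range.mpr (by omega), rfl⟩, ?_⟩
    intro k'
    by_cases hk' : k' = k
    · subst hk'
      have hk := k'.isLt
      simp only [e1, pmN, if_pos rfl]
      split_ifs <;> omega
    · simp [e1, hk']
  -- the order ideal
  set E : Finset (Fin a → ℕ) := Finset.univ.image e1 with hEdef
  set A : Finset (Fin a → ℕ) := insert 0 (E ∪ B) with hAdef
  have hBA : B ⊆ A := fun w hw => by
    rw [hAdef]; exact Finset.mem_insert_of_mem (Finset.mem_union_right _ hw)
  have hEA : E ⊆ A := fun w hw => by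
    rw [hAdef]; exact Finset.mem_insert_of_mem (Finset.mem_union_left _ hw)
  have hBdeg : ∀ w ∈ B, mdeg w = 2 := fun w hw => hPdeg w (hBP hw)
  have hA2deg : ∀ u ∈ A, mdeg u ≤ 2 := by
    intro u hu
    rw [hAdef, Finset.mem_insert, Finset.mem_union] at hu
    rcases hu with rfl | hu | hu
    · simp [mdeg]
    · obtain ⟨i, -, rfl⟩ := Finset.mem_image.mp hu
      rw [mdeg_e1]; omega
    · rw [hBdeg u hu]
  have hOI : IsOrderIdeal A := by
    refine ⟨⟨0, by rw [hAdef]; exact Finset.mem_insert_self _ _⟩, ?_⟩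
    intro u hu v hvu
    have hv2 : mdeg v ≤ 2 := le_trans (mdeg_mono hvu) (hA2deg u hu)
    interval_cases hdv : mdeg v
    · rw [mdeg_eq_zero hdv, hAdef]; exact Finset.mem_insert_self _ _
    · obtain ⟨i, rfl⟩ := mdeg_eq_one hdv
      exact hEA (Finset.mem_image_of_mem _ (Finset.mem_univ i))
    · have hd2 : mdeg u ≤ 2 := hA2deg u hu
      have := mdeg_mono hvu
      have : v = u := le_of_le_mdeg_eq hvu (by omega)
      subst this; exact hu
  have hmaxdeg : ∀ m, IsMaximalIn A m → mdeg m = 2 := by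
    intro m hm
    obtain ⟨hmA, hmmax⟩ := hm
    have hm2 : mdeg m ≤ 2 := hA2deg m hmA
    interval_cases hdm : mdeg m
    · exfalso
      have hm0 : m = 0 := mdeg_eq_zero hdm
      obtain ⟨w, hwM, hwle⟩ := hcov ⟨0, ha⟩
      have : w = m := hmmax w (hBA (hMB hwM)) (hm0 ▸ (fun k => Nat.zero_le _))
      have hwd : mdeg w = 2 := hBdeg w (hMB hwM)
      rw [this, hdm] at hwd
      omega
    · exfalso
      obtain ⟨i, rfl⟩ := mdeg_eq_one hdm
      obtain ⟨w, hwM, hwle⟩ := hcov i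
      have : w = e1 i := hmmax w (hBA (hMB hwM)) hwle
      have hwd : mdeg w = 2 := hBdeg w (hMB hwM)
      rw [this, mdeg_e1] at hwd
      omega
    · rfl
  have hPure : IsPure A := fun u v hu hv => by rw [hmaxdeg u hu, hmaxdeg v hv]
  -- the h-vector
  have hBne : B.Nonempty := Finset.card_pos.mp (by omega)
  have htop : topDegree A = 2 := by
    apply le_antisymm
    · exact Finset.sup_le hA2deg
    · obtain ⟨w, hw⟩ := hBne
      have := Finset.le_sup (f := mdeg) (hBA hw)
      rw [hBdeg w hw] at this
      exact this
  have hv0 : hVec A 0 = 1 := by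
    have : A.filter (fun u => mdeg u = 0) = {0} := by
      apply Finset.ext
      intro v
      rw [Finset.mem_filter, Finset.mem_singleton]
      constructor
      · rintro ⟨-, hv⟩; exact mdeg_eq_zero hv
      · rintro rfl
        exact ⟨Finset.mem_insert_self _ _, by simp [mdeg]⟩
    rw [hVec, this, Finset.card_singleton]
  have hv1 : hVec A 1 = a := by
    have hfil : A.filter (fun u => mdeg u = 1) = E := by
      apply Finset.ext
      intro v
      rw [Finset.mem_filter]
      constructor
      · rintro ⟨-, hv⟩
        obtain ⟨i, rfl⟩ := mdeg_eq_one hv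
        exact Finset.mem_image_of_mem _ (Finset.mem_univ i)
      · intro hv
        refine ⟨hEA hv, ?_⟩
        obtain ⟨i, -, rfl⟩ := Finset.mem_image.mp hv
        exact mdeg_e1 i
    rw [hVec, hfil, hEdef, Finset.card_image_of_injective _ e1_inj, Finset.card_univ,
      Fintype.card_fin]
  have hv2 : hVec A 2 = b := by
    have hfil : A.filter (fun u => mdeg u = 2) = B := by
      apply Finset.ext
      intro v
      rw [Finset.mem_filter]
      constructor
      · rintro ⟨hvA, hv⟩
        rw [hAdef, Finset.mem_insert, Finset.mem_union] at hvA
        rcases hvA with rfl | hvA | hvA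
        · simp [mdeg] at hv
        · obtain ⟨i, -, rfl⟩ := Finset.mem_image.mp hvA
          rw [mdeg_e1] at hv; omega
        · exact hvA
      · intro hv
        exact ⟨hBA hv, hBdeg v hv⟩
    rw [hVec, hfil, hBcard]
  refine ⟨a, A, hOI, hPure, ?_⟩
  rw [hVector, htop]
  have hr : List.range (2 + 1) = [0, 1, 2] := rfl
  rw [hr]
  simp [hv0, hv1, hv2]

/-- The sequence `(1, a, b)` is a pure O-sequence iff `⌈a/2⌉ ≤ b ≤ a(a+1)/2`. -/
theorem stmt_4 (a b : ℕ) (ha : 0 < a) (hb : 0 < b) :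
    IsPureOSequence [1, a, b] ↔ (a + 1) / 2 ≤ b ∧ b ≤ a * (a + 1) / 2 := by
  constructor
  · exact forward hb
  · rintro ⟨h1, h2⟩
    exact backward ha hb h1 h2
end

section
/- Let n ≥ 4 and let h = (1, h_1, ..., h_n) be a pure O-sequence with all entries positive. If h_1 = h_i for some i with 2 ≤ i ≤ n−2, then h_j = h_1 for all j with 1 ≤ j ≤ n−1; that is, h has the form (1, a, a, ..., a, h_n) with a = h_1. -/
-- ====== auxiliary development ======
open Finset
open scoped Classical

namespace StmtAux

variable {s : ℕ}

/-- the monomial `x_k` -/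
def sgl (k : Fin s) : Fin s → ℕ := Pi.single k 1

@[simp] lemma sgl_apply (k j : Fin s) : sgl k j = if j = k then 1 else 0 := by
  simp [sgl, Pi.single_apply]

lemma mdeg_sgl (k : Fin s) : mdeg (sgl k) = 1 := by
  simp [mdeg, sgl]

lemma mdeg_add (u v : Fin s → ℕ) : mdeg (u + v) = mdeg u + mdeg v := by
  simp [mdeg, Finset.sum_add_distrib]

lemma sub_add_sgl {u : Fin s → ℕ} {k : Fin s} (h : 1 ≤ u k) :
    (u - sgl k) + sgl k = u := by
  funext j
  show u j - sgl k j + sgl k j = u j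
  by_cases hj : j = k
  · subst hj
    rw [show sgl j j = 1 by simp]
    omega
  · rw [show sgl k j = 0 by simp [hj]]
    omega

lemma sub_sgl_apply (u : Fin s → ℕ) (k j : Fin s) :
    (u - sgl k) j = u j - (if j = k then 1 else 0) := by
  simp [Pi.sub_apply]

lemma sub_sgl_le (u : Fin s → ℕ) (k : Fin s) : u - sgl k ≤ u := by
  intro j; show u j - sgl k j ≤ u j; omega

lemma mdeg_sub_sgl {u : Fin s → ℕ} {k : Fin s} (h : 1 ≤ u k) :
    mdeg (u - sgl k) + 1 = mdeg u := by
  conv_rhs => rw [← sub_add_sgl h]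
  rw [mdeg_add, mdeg_sgl]

lemma sub_sgl_inj {u : Fin s → ℕ} {k k' : Fin s} (hk : 1 ≤ u k) (_hk' : 1 ≤ u k')
    (h : u - sgl k = u - sgl k') : k = k' := by
  by_contra hne
  have h1 := congrFun h k
  rw [sub_sgl_apply, sub_sgl_apply, if_pos rfl, if_neg (fun hh => hne hh)] at h1
  omega

lemma eq_of_le_of_mdeg_le {v u : Fin s → ℕ} (h : v ≤ u) (hd : mdeg u ≤ mdeg v) :
    v = u := by
  by_contra hne
  have hlt : mdeg v < mdeg u := by
    apply Finset.sum_lt_sum (fun i _ => h i)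
    have : ∃ j, v j ≠ u j := by
      by_contra hc; push_neg at hc; exact hne (funext hc)
    obtain ⟨j, hj⟩ := this
    exact ⟨j, Finset.mem_univ j, lt_of_le_of_ne (h j) hj⟩
  omega

lemma exists_pos_of_mdeg_pos {u : Fin s → ℕ} (h : 1 ≤ mdeg u) : ∃ k, 1 ≤ u k := by
  by_contra hc
  push_neg at hc
  have : mdeg u = 0 := Finset.sum_eq_zero (fun j _ => by have := hc j; omega)
  omega

/-- gap-1 lemma: a codegree-1 subdivisor is obtained by removing one variable. -/
lemma gap_one {w v : Fin s → ℕ} (hle : w ≤ v) (hd : mdeg w + 1 = mdeg v) :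
    ∃ j, 1 ≤ v j ∧ w = v - sgl j := by
  have hne : w ≠ v := fun h => by rw [h] at hd; omega
  have : ∃ j, w j < v j := by
    by_contra hc; push_neg at hc
    exact hne (le_antisymm hle (fun j => hc j))
  obtain ⟨j, hj⟩ := this
  refine ⟨j, by omega, ?_⟩
  have hle' : w ≤ v - sgl j := by
    intro j'
    by_cases h' : j' = j <;> simp [sub_sgl_apply, h']
    · omega
    · exact hle j'
  have hd' : mdeg (v - sgl j) ≤ mdeg w := by
    have := mdeg_sub_sgl (u := v) (k := j) (by omega)
    omega
  exact eq_of_le_of_mdeg_le hle' hd'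

lemma mdeg_support_single {u : Fin s → ℕ} {x : Fin s} (h : ∀ j, j ≠ x → u j = 0) :
    mdeg u = u x := by
  rw [mdeg, Finset.sum_eq_single x (fun j _ hj => h j hj) (fun h' => absurd (Finset.mem_univ x) h')]

lemma mdeg_support_pair {u : Fin s → ℕ} {x z : Fin s} (hxz : x ≠ z)
    (h : ∀ j, j ≠ x → j ≠ z → u j = 0) : mdeg u = u x + u z := by
  rw [mdeg]
  rw [← Finset.sum_subset (Finset.subset_univ {x, z})
      (fun j _ hj => by
        simp only [Finset.mem_insert, Finset.mem_singleton] at hj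
        push_neg at hj
        exact h j hj.1 hj.2)]
  rw [Finset.sum_pair hxz]

end StmtAux

-- B-lemmas chunk (appended to part1 for testing)
namespace StmtAux

variable {s : ℕ}

def lvl (A : Finset (Fin s → ℕ)) (j : ℕ) : Finset (Fin s → ℕ) :=
  A.filter (fun u => mdeg u = j)

def Vset (A : Finset (Fin s → ℕ)) : Finset (Fin s) :=
  Finset.univ.filter (fun k => sgl k ∈ A)

lemma mem_lvl {A : Finset (Fin s → ℕ)} {j : ℕ} {u : Fin s → ℕ} :
    u ∈ lvl A j ↔ u ∈ A ∧ mdeg u = j := by simp [lvl]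

lemma mem_Vset {A : Finset (Fin s → ℕ)} {k : Fin s} :
    k ∈ Vset A ↔ sgl k ∈ A := by simp [Vset]

variable {A : Finset (Fin s → ℕ)}

lemma le_top {u : Fin s → ℕ} (hu : u ∈ A) : mdeg u ≤ topDegree A :=
  Finset.le_sup hu

lemma top_attained (hne : A.Nonempty) : ∃ t ∈ A, mdeg t = topDegree A := by
  obtain ⟨t, ht, hd⟩ := Finset.exists_mem_eq_sup A hne mdeg
  exact ⟨t, ht, hd.symm⟩

lemma maximal_of_top {u : Fin s → ℕ} (hu : u ∈ A) (hd : mdeg u = topDegree A) :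
    IsMaximalIn A u := by
  refine ⟨hu, fun v hv huv => ?_⟩
  exact (eq_of_le_of_mdeg_le huv (by rw [hd]; exact le_top hv)).symm

lemma exists_maximal_above {u : Fin s → ℕ} (hu : u ∈ A) :
    ∃ v ∈ A, u ≤ v ∧ IsMaximalIn A v := by
  have hne : (A.filter (fun w => u ≤ w)).Nonempty := ⟨u, by simp [hu]⟩
  obtain ⟨t, ht, hd⟩ := Finset.exists_mem_eq_sup _ hne mdeg
  simp only [Finset.mem_filter] at ht
  refine ⟨t, ht.1, ht.2, ht.1, fun v hv htv => ?_⟩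
  have hvf : v ∈ A.filter (fun w => u ≤ w) := by
    simp [hv, le_trans ht.2 htv]
  have : mdeg v ≤ mdeg t := hd ▸ Finset.le_sup hvf
  exact (eq_of_le_of_mdeg_le htv this).symm

lemma maximal_mdeg (hne : A.Nonempty) (hpu : IsPure A) {v : Fin s → ℕ}
    (hm : IsMaximalIn A v) : mdeg v = topDegree A := by
  obtain ⟨t, ht, hd⟩ := top_attained hne
  rw [← hd]
  exact hpu v t hm (maximal_of_top ht hd)

lemma exists_top_above (hne : A.Nonempty) (hpu : IsPure A) {u : Fin s → ℕ} (hu : u ∈ A) :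
    ∃ v ∈ A, u ≤ v ∧ mdeg v = topDegree A := by
  obtain ⟨v, hv, huv, hm⟩ := exists_maximal_above hu
  exact ⟨v, hv, huv, maximal_mdeg hne hpu hm⟩

lemma up_step (hcl : ∀ u ∈ A, ∀ v : Fin s → ℕ, v ≤ u → v ∈ A)
    (hne : A.Nonempty) (hpu : IsPure A) {u : Fin s → ℕ} (hu : u ∈ A)
    (hlt : mdeg u < topDegree A) :
    ∃ k, u + sgl k ∈ A := by
  obtain ⟨v, hv, huv, hd⟩ := exists_top_above hne hpu hu
  have hne' : u ≠ v := fun h => by rw [h] at hlt; omega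
  have : ∃ k, u k < v k := by
    by_contra hc; push_neg at hc
    exact hne' (le_antisymm huv hc)
  obtain ⟨k, hk⟩ := this
  refine ⟨k, hcl v hv _ (fun j => ?_)⟩
  show u j + sgl k j ≤ v j
  rw [sgl_apply]
  by_cases hj : j = k
  · rw [if_pos hj, hj]; omega
  · rw [if_neg hj]; have h2 : u j ≤ v j := huv j; omega

lemma climb (hcl : ∀ u ∈ A, ∀ v : Fin s → ℕ, v ≤ u → v ∈ A)
    (hne : A.Nonempty) (hpu : IsPure A) {u : Fin s → ℕ} (hu : u ∈ A) :
    ∀ j, mdeg u ≤ j → j ≤ topDegree A → ∃ u' ∈ A, u ≤ u' ∧ mdeg u' = j := by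
  intro j
  induction j with
  | zero => intro h0 _; exact ⟨u, hu, le_refl u, by omega⟩
  | succ j ih =>
    intro hj hjn
    rcases Nat.lt_or_ge (mdeg u) (j+1) with hlt | hge
    · have hj' : mdeg u ≤ j := by omega
      obtain ⟨u', hu', huu', hd⟩ := ih hj' (by omega)
      obtain ⟨k, hk⟩ := up_step hcl hne hpu hu' (by omega)
      refine ⟨u' + sgl k, hk, le_trans huu' (fun i => by simp), ?_⟩
      rw [mdeg_add, mdeg_sgl, hd]
    · exact ⟨u, hu, le_refl u, by omega⟩

lemma mem_Vset_of_pos (hcl : ∀ u ∈ A, ∀ v : Fin s → ℕ, v ≤ u → v ∈ A)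
    {u : Fin s → ℕ} (hu : u ∈ A) {k : Fin s} (hk : 1 ≤ u k) : k ∈ Vset A := by
  rw [mem_Vset]
  refine hcl u hu _ (fun j => ?_)
  show sgl k j ≤ u j
  rw [sgl_apply]
  by_cases hj : j = k
  · rw [if_pos hj, hj]; omega
  · rw [if_neg hj]; omega

lemma cover_lemma (hcl : ∀ u ∈ A, ∀ v : Fin s → ℕ, v ≤ u → v ∈ A)
    (hne : A.Nonempty) (hpu : IsPure A) {k : Fin s} (hk : k ∈ Vset A)
    {j : ℕ} (h1 : 1 ≤ j) (hj : j ≤ topDegree A) :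
    ∃ u, u ∈ lvl A j ∧ 1 ≤ u k := by
  rw [mem_Vset] at hk
  obtain ⟨u, hu, hle, hd⟩ := climb hcl hne hpu hk j (by rw [mdeg_sgl]; omega) hj
  refine ⟨u, mem_lvl.2 ⟨hu, hd⟩, ?_⟩
  have h2 : sgl k k ≤ u k := hle k
  rw [show sgl k k = 1 by simp] at h2
  omega

lemma shadow_chain (hcl : ∀ u ∈ A, ∀ v : Fin s → ℕ, v ≤ u → v ∈ A)
    (hne : A.Nonempty) (hpu : IsPure A) {u : Fin s → ℕ} {j : ℕ}
    (hu : u ∈ lvl A j) (hlt : j < topDegree A) :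
    ∃ w ∈ lvl A (j + 1), u ≤ w := by
  rw [mem_lvl] at hu
  obtain ⟨w, hw, hle, hd⟩ := climb hcl hne hpu hu.1 (j+1) (by omega) (by omega)
  exact ⟨w, mem_lvl.2 ⟨hw, hd⟩, hle⟩

lemma mdeg_eq_zero {u : Fin s → ℕ} (h : mdeg u = 0) : u = 0 := by
  funext j
  have := Finset.sum_eq_zero_iff.1 h j (Finset.mem_univ j)
  simpa using this

lemma sgl_inj {k k' : Fin s} (h : sgl k = sgl k') : k = k' := by
  have := congrFun h k
  rw [show sgl k k = 1 by simp] at this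
  by_contra hne
  rw [show sgl k' k = 0 by simp [fun hh : k = k' => hne hh]] at this
  omega

lemma lvl_one_card : (lvl A 1).card = (Vset A).card := by
  have himg : lvl A 1 = (Vset A).image sgl := by
    ext u
    rw [mem_lvl]
    constructor
    · rintro ⟨hu, hd⟩
      obtain ⟨k, hk⟩ := exists_pos_of_mdeg_pos (u := u) (by omega)
      have h0 : mdeg (u - sgl k) + 1 = 1 := by rw [mdeg_sub_sgl hk]; exact hd
      have : u - sgl k = 0 := mdeg_eq_zero (u := u - sgl k) (by omega)
      have hu' : u = sgl k := by
        conv_lhs => rw [← sub_add_sgl hk]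
        rw [this, zero_add]
      refine Finset.mem_image.2 ⟨k, ?_, hu'.symm⟩
      rw [mem_Vset, ← hu']; exact hu
    · intro hu
      obtain ⟨k, hk, hu'⟩ := Finset.mem_image.1 hu
      rw [mem_Vset] at hk
      exact ⟨hu' ▸ hk, hu' ▸ mdeg_sgl k⟩
  rw [himg, Finset.card_image_of_injective _ (fun a b h => sgl_inj h)]

end StmtAux

namespace StmtAux

variable {s : ℕ}

/-- A configuration for the level `e+1 → e` shadow analysis. -/
structure Cfg (A : Finset (Fin s → ℕ)) (e : ℕ) where
  m : Fin s → Fin s → ℕ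
  r : Fin s → Fin s
  F : Fin s → Fin s → ℕ
  hmA : ∀ k ∈ Vset A, m k ∈ A
  hmdeg : ∀ k ∈ Vset A, mdeg (m k) = e + 1
  hrV : ∀ k ∈ Vset A, r k ∈ Vset A
  hrpos : ∀ k ∈ Vset A, 1 ≤ m (r k) k
  hrmin : ∀ k ∈ Vset A, ∀ y ∈ Vset A, 1 ≤ m y k → r k ≤ y
  hFA : ∀ k ∈ Vset A, F k ∈ A
  hFdeg : ∀ k ∈ Vset A, mdeg (F k) = e
  hFle : ∀ k ∈ Vset A, F k ≤ m (r k)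
  hFwit : ∀ k ∈ Vset A, ∃ u ∈ Vset A, r u = r k ∧ 1 ≤ F k u
  hFbig : ∀ k ∈ Vset A,
    2 ≤ ((Vset A).filter (fun k' => r k' = r k)).card → F k = m (r k) - sgl k
  hFtwo : ∀ k ∈ Vset A, 2 ≤ m (r k) k → F k = m (r k) - sgl k

variable {A : Finset (Fin s → ℕ)} {e : ℕ}

/-- the component of `y` -/
def Tof (C : Cfg A e) (y : Fin s) : Finset (Fin s) :=
  (Vset A).filter (fun k => C.r k = y)

lemma mem_Tof {C : Cfg A e} {y k : Fin s} :
    k ∈ Tof C y ↔ k ∈ Vset A ∧ C.r k = y := by simp [Tof]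

lemma self_mem_Tof {C : Cfg A e} {k : Fin s} (hk : k ∈ Vset A) :
    k ∈ Tof C (C.r k) := mem_Tof.2 ⟨hk, rfl⟩

lemma Tof_pos {C : Cfg A e} {y k : Fin s} (hk : k ∈ Tof C y) : 1 ≤ C.m y k := by
  rw [mem_Tof] at hk
  have := C.hrpos k hk.1
  rwa [hk.2] at this

lemma exists_cfg (hcl : ∀ u ∈ A, ∀ v : Fin s → ℕ, v ≤ u → v ∈ A)
    (hne : A.Nonempty) (hpu : IsPure A)
    (he1 : 1 ≤ e) (hen : e + 1 ≤ topDegree A) : Nonempty (Cfg A e) := by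
  classical
  have hm' : ∀ k, ∃ u, k ∈ Vset A → (u ∈ lvl A (e+1) ∧ 1 ≤ u k) := by
    intro k
    by_cases hk : k ∈ Vset A
    · obtain ⟨u, h⟩ := cover_lemma hcl hne hpu hk (by omega) hen
      exact ⟨u, fun _ => h⟩
    · exact ⟨0, fun h => absurd h hk⟩
  choose m hm2 using hm'
  have hmA : ∀ k ∈ Vset A, m k ∈ A := fun k hk => (mem_lvl.1 (hm2 k hk).1).1
  have hmdeg : ∀ k ∈ Vset A, mdeg (m k) = e + 1 := fun k hk => (mem_lvl.1 (hm2 k hk).1).2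
  have hmk : ∀ k ∈ Vset A, 1 ≤ m k k := fun k hk => (hm2 k hk).2
  -- r
  set R : Fin s → Finset (Fin s) := fun k => (Vset A).filter (fun y => 1 ≤ m y k) with hR
  have hRne : ∀ k ∈ Vset A, (R k).Nonempty := by
    intro k hk
    exact ⟨k, by simp [hR, hk, hmk k hk]⟩
  set r : Fin s → Fin s := fun k =>
    if hk : (R k).Nonempty then (R k).min' hk else k with hrdef
  have hrV : ∀ k ∈ Vset A, r k ∈ Vset A := by
    intro k hk
    have h1 : r k = (R k).min' (hRne k hk) := by simp [hrdef, hRne k hk]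
    have h2 := (R k).min'_mem (hRne k hk)
    rw [← h1] at h2
    simp only [hR, Finset.mem_filter] at h2
    exact h2.1
  have hrpos : ∀ k ∈ Vset A, 1 ≤ m (r k) k := by
    intro k hk
    have h1 : r k = (R k).min' (hRne k hk) := by simp [hrdef, hRne k hk]
    have h2 := (R k).min'_mem (hRne k hk)
    rw [← h1] at h2
    simp only [hR, Finset.mem_filter] at h2
    exact h2.2
  have hrmin : ∀ k ∈ Vset A, ∀ y ∈ Vset A, 1 ≤ m y k → r k ≤ y := by
    intro k hk y hy hpos
    have h1 : r k = (R k).min' (hRne k hk) := by simp [hrdef, hRne k hk]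
    rw [h1]
    exact (R k).min'_le y (by simp [hR, hy, hpos])
  -- chooser for the third branch
  have hz' : ∀ k, ∃ z, k ∈ Vset A → m (r k) k = 1 →
      (z ≠ k ∧ 1 ≤ m (r k) z) := by
    intro k
    by_cases hk : k ∈ Vset A
    · by_cases h1 : m (r k) k = 1
      · have : ∃ z, z ≠ k ∧ 1 ≤ m (r k) z := by
          by_contra hc
          push_neg at hc
          have hzero : ∀ j, j ≠ k → m (r k) j = 0 := by
            intro j hj
            have := hc j hj
            omega
          have := mdeg_support_single hzero
          rw [hmdeg _ (hrV k hk), h1] at this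
          omega
        obtain ⟨z, hz⟩ := this
        exact ⟨z, fun _ _ => hz⟩
      · exact ⟨k, fun _ h => absurd h h1⟩
    · exact ⟨k, fun h => absurd h hk⟩
  choose zf hzf using hz'
  set F : Fin s → Fin s → ℕ := fun k =>
    if (2 ≤ ((Vset A).filter (fun k' => r k' = r k)).card ∨ 2 ≤ m (r k) k)
    then m (r k) - sgl k else m (r k) - sgl (zf k) with hFdef
  have hForm : ∀ k ∈ Vset A, ∃ j, 1 ≤ m (r k) j ∧ F k = m (r k) - sgl j := by
    intro k hk
    by_cases hb : (2 ≤ ((Vset A).filter (fun k' => r k' = r k)).card ∨ 2 ≤ m (r k) k)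
    · exact ⟨k, hrpos k hk, by simp [hFdef, hb]⟩
    · push_neg at hb
      have h1 : m (r k) k = 1 := by have := hrpos k hk; omega
      obtain ⟨hz1, hz2⟩ := hzf k hk h1
      exact ⟨zf k, hz2, by
        simp only [hFdef]
        rw [if_neg]
        push_neg
        exact hb⟩
  refine ⟨⟨m, r, F, hmA, hmdeg, hrV, hrpos, hrmin, ?_, ?_, ?_, ?_, ?_, ?_⟩⟩
  · -- hFA
    intro k hk
    obtain ⟨j, hj1, hj2⟩ := hForm k hk
    rw [hj2]
    exact hcl _ (hmA _ (hrV k hk)) _ (sub_sgl_le _ _)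
  · -- hFdeg
    intro k hk
    obtain ⟨j, hj1, hj2⟩ := hForm k hk
    rw [hj2]
    have := mdeg_sub_sgl hj1
    have h2 := hmdeg _ (hrV k hk)
    omega
  · -- hFle
    intro k hk
    obtain ⟨j, hj1, hj2⟩ := hForm k hk
    rw [hj2]
    exact sub_sgl_le _ _
  · -- hFwit
    intro k hk
    by_cases hcard : 2 ≤ ((Vset A).filter (fun k' => r k' = r k)).card
    · obtain ⟨u, hu, hune⟩ := Finset.exists_mem_ne
        (s := (Vset A).filter (fun k' => r k' = r k)) (by omega) k
      simp only [Finset.mem_filter] at hu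
      refine ⟨u, hu.1, hu.2, ?_⟩
      have hF : F k = m (r k) - sgl k := by simp [hFdef, Or.inl hcard]
      rw [hF]
      show 1 ≤ m (r k) u - sgl k u
      rw [show sgl k u = 0 by simp [hune]]
      have hpos : 1 ≤ m (r u) u := hrpos u hu.1
      rw [hu.2] at hpos
      omega
    · by_cases h2 : 2 ≤ m (r k) k
      · refine ⟨k, hk, rfl, ?_⟩
        have hF : F k = m (r k) - sgl k := by simp [hFdef, Or.inr h2]
        rw [hF]
        show 1 ≤ m (r k) k - sgl k k
        rw [show sgl k k = 1 by simp]
        omega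
      · refine ⟨k, hk, rfl, ?_⟩
        have h1 : m (r k) k = 1 := by have := hrpos k hk; omega
        obtain ⟨hz1, hz2⟩ := hzf k hk h1
        have hF : F k = m (r k) - sgl (zf k) := by
          simp only [hFdef]
          rw [if_neg]
          push_neg
          exact ⟨by omega, by omega⟩
        rw [hF]
        show 1 ≤ m (r k) k - sgl (zf k) k
        rw [show sgl (zf k) k = 0 by rw [sgl_apply, if_neg (fun h => hz1 h.symm)]]
        omega
  · -- hFbig
    intro k hk hcard
    simp [hFdef, Or.inl hcard]
  · -- hFtwo
    intro k hk h2
    simp [hFdef, Or.inr h2]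

lemma cfg_inj (C : Cfg A e) :
    ∀ k ∈ Vset A, ∀ k' ∈ Vset A, C.F k = C.F k' → k = k' := by
  have key : ∀ k ∈ Vset A, ∀ k' ∈ Vset A, C.F k = C.F k' → C.r k' ≤ C.r k := by
    intro k hk k' hk' hF
    obtain ⟨u, hu, hru, hpos⟩ := C.hFwit k' hk'
    have h1 : 1 ≤ C.F k u := by rw [hF]; exact hpos
    have h2 : C.F k u ≤ C.m (C.r k) u := C.hFle k hk u
    have h3 : C.r u ≤ C.r k := C.hrmin u hu (C.r k) (C.hrV k hk) (by omega)
    rwa [hru] at h3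
  intro k hk k' hk' hF
  have hy : C.r k = C.r k' := le_antisymm (key k' hk' k hk hF.symm) (key k hk k' hk' hF)
  by_cases hcard : 2 ≤ ((Vset A).filter (fun j => C.r j = C.r k)).card
  · have hcard' : 2 ≤ ((Vset A).filter (fun j => C.r j = C.r k')).card := by rwa [← hy]
    have e1 := C.hFbig k hk hcard
    have e2 := C.hFbig k' hk' hcard'
    rw [e1, e2, ← hy] at hF
    exact sub_sgl_inj (C.hrpos k hk) (by rw [hy]; exact C.hrpos k' hk') hF
  · push_neg at hcard
    have hmem1 : k ∈ (Vset A).filter (fun j => C.r j = C.r k) := by simp [hk]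
    have hmem2 : k' ∈ (Vset A).filter (fun j => C.r j = C.r k) := by simp [hk', hy.symm]
    exact Finset.card_le_one.1 (by omega) k hmem1 k' hmem2

lemma cfg_card_le (C : Cfg A e) : (Vset A).card ≤ (lvl A e).card := by
  apply Finset.card_le_card_of_injOn C.F
  · intro k hk
    exact mem_lvl.2 ⟨C.hFA k hk, C.hFdeg k hk⟩
  · intro k hk k' hk' hF
    exact cfg_inj C k hk k' hk' hF

/-- L1 : every middle level has at least `|V|` monomials. -/
lemma L1 (hcl : ∀ u ∈ A, ∀ v : Fin s → ℕ, v ≤ u → v ∈ A)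
    (hne : A.Nonempty) (hpu : IsPure A) {j : ℕ}
    (hj1 : 1 ≤ j) (hjn : j + 1 ≤ topDegree A) :
    (Vset A).card ≤ (lvl A j).card := by
  obtain ⟨C⟩ := exists_cfg hcl hne hpu hj1 hjn
  exact cfg_card_le C

/-- surjectivity of F under the equality hypothesis -/
lemma cfg_surj (C : Cfg A e) (heq : (lvl A e).card ≤ (Vset A).card) :
    ∀ w ∈ lvl A e, ∃ k ∈ Vset A, C.F k = w := by
  have himg : (Vset A).image C.F = lvl A e := by
    apply Finset.eq_of_subset_of_card_le
    · intro w hw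
      obtain ⟨k, hk, hFk⟩ := Finset.mem_image.1 hw
      exact hFk ▸ mem_lvl.2 ⟨C.hFA k hk, C.hFdeg k hk⟩
    · calc (lvl A e).card ≤ (Vset A).card := heq
        _ = ((Vset A).image C.F).card :=
          (Finset.card_image_of_injOn (fun k hk k' hk' h => cfg_inj C k hk k' hk' h)).symm
  intro w hw
  rw [← himg] at hw
  obtain ⟨k, hk, hFk⟩ := Finset.mem_image.1 hw
  exact ⟨k, hk, hFk⟩

end StmtAux

namespace StmtAux

variable {s : ℕ} {A : Finset (Fin s → ℕ)} {e : ℕ}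

lemma two_coords_le_mdeg {u : Fin s → ℕ} {a b : Fin s} (hab : a ≠ b) :
    u a + u b ≤ mdeg u := by
  rw [mdeg, ← Finset.sum_pair hab]
  exact Finset.sum_le_sum_of_subset (Finset.subset_univ _)

lemma three_coords_le_mdeg {u : Fin s → ℕ} {a b c : Fin s}
    (hab : a ≠ b) (hac : a ≠ c) (hbc : b ≠ c) :
    u a + u b + u c ≤ mdeg u := by
  have h1 : ({a, b, c} : Finset (Fin s)).sum u = u a + u b + u c := by
    rw [Finset.sum_insert (by simp [hab, hac]), Finset.sum_pair hbc]
    ring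
  rw [mdeg, ← h1]
  exact Finset.sum_le_sum_of_subset (Finset.subset_univ _)

lemma sub_mem_lvl (hcl : ∀ u ∈ A, ∀ v : Fin s → ℕ, v ≤ u → v ∈ A)
    {u : Fin s → ℕ} {j : ℕ} {k : Fin s} (hu : u ∈ lvl A (j+1)) (hk : 1 ≤ u k) :
    u - sgl k ∈ lvl A j := by
  rw [mem_lvl] at hu ⊢
  refine ⟨hcl u hu.1 _ (sub_sgl_le u k), ?_⟩
  have := mdeg_sub_sgl hk
  omega

section Core

variable (C : Cfg A e)

lemma cmp_exists (heq : (lvl A e).card ≤ (Vset A).card)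
    {w : Fin s → ℕ} (hw : w ∈ lvl A e) :
    ∃ y ∈ Vset A, w ≤ C.m y ∧ ∃ u ∈ Vset A, C.r u = y ∧ 1 ≤ w u := by
  obtain ⟨k, hk, hFk⟩ := cfg_surj C heq w hw
  refine ⟨C.r k, C.hrV k hk, hFk ▸ C.hFle k hk, ?_⟩
  obtain ⟨u, hu, hru, hpos⟩ := C.hFwit k hk
  exact ⟨u, hu, hru, hFk ▸ hpos⟩

lemma cmp_unique {w : Fin s → ℕ} {y y' : Fin s}
    (hy : y ∈ Vset A) (hy' : y' ∈ Vset A)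
    (hle : w ≤ C.m y) (hle' : w ≤ C.m y')
    (hwit : ∃ u ∈ Vset A, C.r u = y ∧ 1 ≤ w u)
    (hwit' : ∃ u ∈ Vset A, C.r u = y' ∧ 1 ≤ w u) : y = y' := by
  obtain ⟨u, hu, hru, hpos⟩ := hwit
  obtain ⟨u', hu', hru', hpos'⟩ := hwit'
  have h1 : w u ≤ C.m y' u := hle' u
  have h2 : C.r u ≤ y' := C.hrmin u hu y' hy' (by omega)
  have h3 : w u' ≤ C.m y u' := hle u'
  have h4 : C.r u' ≤ y := C.hrmin u' hu' y hy (by omega)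
  rw [hru] at h2
  rw [hru'] at h4
  exact le_antisymm h2 h4

lemma cmp_to_F (heq : (lvl A e).card ≤ (Vset A).card)
    {w : Fin s → ℕ} {y : Fin s} (hw : w ∈ lvl A e) (hy : y ∈ Vset A)
    (hle : w ≤ C.m y) (hwit : ∃ u ∈ Vset A, C.r u = y ∧ 1 ≤ w u) :
    ∃ k ∈ Vset A, C.r k = y ∧ C.F k = w := by
  obtain ⟨k, hk, hFk⟩ := cfg_surj C heq w hw
  have hy' : C.r k = y := by
    apply cmp_unique C (C.hrV k hk) hy (hFk ▸ C.hFle k hk) hle _ hwit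
    obtain ⟨u, hu, hru, hpos⟩ := C.hFwit k hk
    exact ⟨u, hu, hru, hFk ▸ hpos⟩
  exact ⟨k, hk, hy', hFk⟩

/-- Fact 1a: big components have support exactly the component. -/
lemma big_supp (hcl : ∀ u ∈ A, ∀ v : Fin s → ℕ, v ≤ u → v ∈ A)
    (heq : (lvl A e).card ≤ (Vset A).card)
    {y : Fin s} (hy : y ∈ Vset A) (hbig : 2 ≤ (Tof C y).card)
    {j : Fin s} (hj : 1 ≤ C.m y j) : j ∈ Vset A ∧ C.r j = y := by
  have hmy : C.m y ∈ lvl A (e+1) := mem_lvl.2 ⟨C.hmA y hy, C.hmdeg y hy⟩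
  have hjV : j ∈ Vset A := mem_Vset_of_pos hcl (C.hmA y hy) hj
  set w := C.m y - sgl j with hwdef
  have hw : w ∈ lvl A e := sub_mem_lvl hcl hmy hj
  obtain ⟨u, hu, hune⟩ := Finset.exists_mem_ne (s := Tof C y) (by omega) j
  rw [mem_Tof] at hu
  have hwit : ∃ u' ∈ Vset A, C.r u' = y ∧ 1 ≤ w u' := by
    refine ⟨u, hu.1, hu.2, ?_⟩
    show 1 ≤ C.m y u - sgl j u
    rw [show sgl j u = 0 by simp [hune]]
    have := Tof_pos (mem_Tof.2 hu)
    omega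
  obtain ⟨k, hk, hrk, hFk⟩ := cmp_to_F C heq hw hy (sub_sgl_le _ _) hwit
  have hkT : k ∈ Tof C y := mem_Tof.2 ⟨hk, hrk⟩
  have hbig' : 2 ≤ ((Vset A).filter (fun k' => C.r k' = C.r k)).card := by
    have : (Vset A).filter (fun k' => C.r k' = C.r k) = Tof C y := by
      rw [hrk]; rfl
    rwa [this]
  have hFk2 := C.hFbig k hk hbig'
  rw [hrk] at hFk2
  rw [hFk2] at hFk
  have : k = j := sub_sgl_inj (Tof_pos hkT) hj hFk
  rw [← this]
  exact ⟨hk, hrk⟩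

/-- Fact 1b: the shape of small components. -/
lemma small_shape (hcl : ∀ u ∈ A, ∀ v : Fin s → ℕ, v ≤ u → v ∈ A)
    (heq : (lvl A e).card ≤ (Vset A).card) (he1 : 1 ≤ e)
    {y x : Fin s} (hy : y ∈ Vset A) (hx : x ∈ Tof C y)
    (hsmall : ∀ k ∈ Vset A, C.r k = y → k = x) :
    (∀ j, j ≠ x → C.m y j = 0) ∨
    (∃ z, z ≠ x ∧ C.m y x = 1 ∧ C.m y z = e ∧ ∀ j, j ≠ x → j ≠ z → C.m y j = 0) := by
  have hmy : C.m y ∈ lvl A (e+1) := mem_lvl.2 ⟨C.hmA y hy, C.hmdeg y hy⟩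
  have hxV : x ∈ Vset A := (mem_Tof.1 hx).1
  have hrx : C.r x = y := (mem_Tof.1 hx).2
  have hmyx : 1 ≤ C.m y x := Tof_pos hx
  -- key: any codeg-1 divisor of m y with x-coordinate ≥ 1 equals F x
  have hkey : ∀ b, 1 ≤ C.m y b → 1 ≤ C.m y x - sgl b x → C.F x = C.m y - sgl b := by
    intro b hb hxb
    have hw : C.m y - sgl b ∈ lvl A e := sub_mem_lvl hcl hmy hb
    obtain ⟨k, hk, hrk, hFk⟩ := cmp_to_F C heq hw hy (sub_sgl_le _ _)
      ⟨x, hxV, hrx, hxb⟩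
    have : k = x := hsmall k hk hrk
    rw [← this, hFk]
  by_cases h2 : 2 ≤ C.m y x
  · left
    intro j hj
    by_contra hc
    have hj1 : 1 ≤ C.m y j := by omega
    have e1 : C.F x = C.m y - sgl j := hkey j hj1 (by
      rw [show sgl j x = 0 by rw [sgl_apply, if_neg (fun h : x = j => hj h.symm)]]; omega)
    have e2 : C.F x = C.m y - sgl x := by
      have h := C.hFtwo x hxV
      rw [hrx] at h
      exact h h2
    rw [e2] at e1
    exact hj (sub_sgl_inj hmyx hj1 e1).symm
  · right
    have h1 : C.m y x = 1 := by omega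
    have hzex : ∃ z, z ≠ x ∧ 1 ≤ C.m y z := by
      by_contra hc
      push_neg at hc
      have hzero : ∀ j, j ≠ x → C.m y j = 0 := fun j hj => by have := hc j hj; omega
      have := mdeg_support_single hzero
      rw [C.hmdeg y hy, h1] at this
      omega
    obtain ⟨z, hzx, hz1⟩ := hzex
    have huniq : ∀ b, b ≠ x → 1 ≤ C.m y b → b = z := by
      intro b hbx hb1
      have e1 : C.F x = C.m y - sgl b := hkey b hb1 (by
        rw [show sgl b x = 0 by rw [sgl_apply, if_neg (fun h : x = b => hbx h.symm)]]; omega)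
      have e2 : C.F x = C.m y - sgl z := hkey z hz1 (by
        rw [show sgl z x = 0 by rw [sgl_apply, if_neg (fun h : x = z => hzx h.symm)]]; omega)
      rw [e2] at e1
      exact (sub_sgl_inj hz1 hb1 e1).symm
    have hzero : ∀ j, j ≠ x → j ≠ z → C.m y j = 0 := by
      intro j hjx hjz
      by_contra hc
      exact hjz (huniq j hjx (by omega))
    have hdeg : C.m y x + C.m y z = e + 1 := by
      have := mdeg_support_pair (Ne.symm hzx) (fun j h1 h2 => hzero j h1 h2)
      rw [C.hmdeg y hy] at this
      omega
    exact ⟨z, hzx, h1, by omega, hzero⟩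

/-- Fact 1c: the tail variable of an E-component has large multiplicity in its
own component head. -/
lemma eshape_tail (hcl : ∀ u ∈ A, ∀ v : Fin s → ℕ, v ≤ u → v ∈ A)
    (heq : (lvl A e).card ≤ (Vset A).card) (he1 : 1 ≤ e)
    {y x z : Fin s} (hy : y ∈ Vset A) (hzx : z ≠ x)
    (h1 : C.m y x = 1) (hze : C.m y z = e)
    (h0 : ∀ j, j ≠ x → j ≠ z → C.m y j = 0) :
    z ∈ Vset A ∧ e ≤ C.m (C.r z) z := by
  have hmy : C.m y ∈ lvl A (e+1) := mem_lvl.2 ⟨C.hmA y hy, C.hmdeg y hy⟩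
  have hzV : z ∈ Vset A := mem_Vset_of_pos hcl (C.hmA y hy) (by omega)
  set w := C.m y - sgl x with hwdef
  have hw : w ∈ lvl A e := sub_mem_lvl hcl hmy (by omega)
  obtain ⟨y', hy', hle', u, hu, hru, hpos⟩ := cmp_exists C heq hw
  have hwu : w u = C.m y u - sgl x u := rfl
  have huz : u = z := by
    by_contra hne
    by_cases hux : u = x
    · rw [hux] at hpos
      have : w x = C.m y x - sgl x x := rfl
      rw [show sgl x x = 1 by simp] at this
      omega
    · have := h0 u hux hne
      rw [show sgl x u = 0 by simp [fun h : u = x => hux h]] at hwu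
      omega
  have hwz : w z = e := by
    have : w z = C.m y z - sgl x z := rfl
    rw [show sgl x z = 0 by simp [hzx]] at this
    omega
  have h2 : w z ≤ C.m y' z := hle' z
  rw [huz] at hru
  rw [hru]
  exact ⟨hzV, by omega⟩

end Core

end StmtAux

namespace StmtAux

variable {s : ℕ}

lemma sub_sgl_self (u : Fin s → ℕ) (k : Fin s) : (u - sgl k) k = u k - 1 := by
  show u k - sgl k k = u k - 1
  rw [show sgl k k = 1 by simp]

lemma sub_sgl_other (u : Fin s → ℕ) {j k : Fin s} (h : j ≠ k) : (u - sgl k) j = u j := by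
  show u j - sgl k j = u j
  rw [show sgl k j = 0 by rw [sgl_apply, if_neg h]]
  omega

variable {A : Finset (Fin s → ℕ)} {e : ℕ}

/-- Fact 2 : classification of the monomials one level above an equality level. -/
lemma classification (C : Cfg A e)
    (hcl : ∀ u ∈ A, ∀ v : Fin s → ℕ, v ≤ u → v ∈ A)
    (heq : (lvl A e).card ≤ (Vset A).card) (he2 : 2 ≤ e) :
    ∀ m' ∈ lvl A (e+1),
      (∃ y ∈ Vset A, (∃ u ∈ Vset A, C.r u = y) ∧ m' = C.m y) ∨
      (∃ b ∈ Vset A, (∀ j, j ≠ b → m' j = 0) ∧ e ≤ C.m (C.r b) b ∧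
        2 ≤ (Tof C (C.r b)).card) := by
  intro m' hm'
  have hm'A : m' ∈ A := (mem_lvl.1 hm').1
  have hm'd : mdeg m' = e + 1 := (mem_lvl.1 hm').2
  obtain ⟨b₀, hb₀⟩ := exists_pos_of_mdeg_pos (u := m') (by omega)
  have hb₀V : b₀ ∈ Vset A := mem_Vset_of_pos hcl hm'A hb₀
  set w₀ := m' - sgl b₀ with hw₀def
  have hw₀ : w₀ ∈ lvl A e := sub_mem_lvl hcl hm' hb₀
  have hw₀d : mdeg w₀ = e := (mem_lvl.1 hw₀).2
  obtain ⟨y₀, hy₀V, hw₀le, u₀, hu₀V, hru₀, hw₀u₀⟩ := cmp_exists C heq hw₀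
  by_cases hbig : 2 ≤ (Tof C y₀).card
  · -- ===== BIG component case =====
    have hsupp : ∀ j, 1 ≤ C.m y₀ j → j ∈ Vset A ∧ C.r j = y₀ :=
      fun j hj => big_supp C hcl heq hy₀V hbig hj
    have hsm' : ∀ j, 1 ≤ m' j → j ≠ b₀ → C.r j = y₀ := by
      intro j hj hjb
      have h1 : w₀ j = m' j := sub_sgl_other m' hjb
      have h2 : w₀ j ≤ C.m y₀ j := hw₀le j
      exact (hsupp j (by omega)).2
    by_cases hpure : ∀ c, 1 ≤ m' c → c = b₀
    · -- pure power of b₀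
      right
      have hzero : ∀ j, j ≠ b₀ → m' j = 0 := by
        intro j hj
        by_contra hc
        exact hj (hpure j (by omega))
      have hm'b : m' b₀ = e + 1 := by
        have := mdeg_support_single hzero
        omega
      have hw₀b : w₀ b₀ = e := by
        have h9 : w₀ b₀ = m' b₀ - 1 := sub_sgl_self m' b₀
        omega
      have hb₀y : C.r b₀ = y₀ := by
        have h2 : w₀ b₀ ≤ C.m y₀ b₀ := hw₀le b₀
        exact (hsupp b₀ (by omega)).2
      refine ⟨b₀, hb₀V, hzero, ?_, ?_⟩
      · rw [hb₀y]
        have h2 : w₀ b₀ ≤ C.m y₀ b₀ := hw₀le b₀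
        omega
      · rw [hb₀y]; exact hbig
    · push_neg at hpure
      obtain ⟨c, hc1, hcb⟩ := hpure
      set w_c := m' - sgl c with hwcdef
      have hwc : w_c ∈ lvl A e := sub_mem_lvl hcl hm' hc1
      have hwcd : mdeg w_c = e := (mem_lvl.1 hwc).2
      obtain ⟨y_c, hycV, hwcle, u_c, hucV, hruc, hwcuc⟩ := cmp_exists C heq hwc
      have hwcb₀ : w_c b₀ = m' b₀ := sub_sgl_other m' (fun h => hcb h.symm)
      by_cases hyc : y_c = y₀
      · -- m' = m y₀, head
        left
        have hle : m' ≤ C.m y₀ := by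
          rw [Pi.le_def]
          intro j
          by_cases hjb : j = b₀
          · have h2 : w_c b₀ ≤ C.m y_c b₀ := hwcle b₀
            rw [hyc] at h2
            have h3 : w_c b₀ = m' b₀ := hwcb₀
            rw [hjb]
            omega
          · have h1 : w₀ j = m' j := sub_sgl_other m' hjb
            have h2 : w₀ j ≤ C.m y₀ j := hw₀le j
            omega
        have heqm : m' = C.m y₀ :=
          eq_of_le_of_mdeg_le hle (by rw [C.hmdeg y₀ hy₀V, hm'd])
        exact ⟨y₀, hy₀V, ⟨u₀, hu₀V, hru₀⟩, heqm⟩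
      · -- y_c ≠ y₀
        have hucb₀ : u_c = b₀ := by
          by_contra hne
          have h1 : w_c u_c ≤ m' u_c := sub_sgl_le m' c u_c
          have h3 : C.r u_c = y₀ := hsm' u_c (by omega) hne
          rw [hruc] at h3
          exact hyc h3
        have hrb₀c : C.r b₀ = y_c := by rw [← hucb₀]; exact hruc
        have hwcontr : (∀ j, 1 ≤ w_c j → j = b₀) → False := by
          intro hsc
          have hzero : ∀ j, j ≠ b₀ → w_c j = 0 := by
            intro j hj
            by_contra hcj
            exact hj (hsc j (by omega))
          have hwcb : w_c b₀ = e := by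
            have h := mdeg_support_single hzero
            omega
          have hw₀b : 1 ≤ w₀ b₀ := by
            have h1 : w₀ b₀ = m' b₀ - 1 := sub_sgl_self m' b₀
            omega
          have h3 : C.r b₀ = y₀ := (hsupp b₀ (le_trans hw₀b (hw₀le b₀))).2
          rw [hrb₀c] at h3
          exact hyc h3
        by_cases hbigc : 2 ≤ (Tof C y_c).card
        · exfalso
          apply hwcontr
          intro j hj
          have h2 : 1 ≤ C.m y_c j := le_trans hj (hwcle j)
          have h3 : C.r j = y_c := (big_supp C hcl heq hycV hbigc h2).2
          have h4 : 1 ≤ m' j := le_trans hj (sub_sgl_le m' c j)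
          by_contra hjb
          have h5 := hsm' j h4 hjb
          rw [h3] at h5
          exact hyc h5
        · -- small component y_c, x := b₀
          have hb₀T : b₀ ∈ Tof C y_c := mem_Tof.2 ⟨hb₀V, hrb₀c⟩
          have hsmallc : ∀ k ∈ Vset A, C.r k = y_c → k = b₀ := by
            intro k hk hrk
            push_neg at hbigc
            exact Finset.card_le_one.1 (by omega) k (mem_Tof.2 ⟨hk, hrk⟩) b₀ hb₀T
          rcases small_shape C hcl heq (by omega) hycV hb₀T hsmallc with
            hS | ⟨z, hzb, hmb1, hmze, hmzero⟩
          · exfalso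
            apply hwcontr
            intro j hj
            have h2 : 1 ≤ C.m y_c j := le_trans hj (hwcle j)
            by_contra hjb
            have := hS j hjb
            omega
          · -- E shape for y_c
            have hwcb1 : w_c b₀ = 1 := by
              have h1 : w_c b₀ ≤ C.m y_c b₀ := hwcle b₀
              have h2 : 1 ≤ w_c b₀ := by rw [← hucb₀]; exact hwcuc
              omega
            have hwczero : ∀ j, j ≠ b₀ → j ≠ z → w_c j = 0 := by
              intro j h1 h2
              have h3 : w_c j ≤ C.m y_c j := hwcle j
              have := hmzero j h1 h2
              omega
            have hwcz : w_c z = e - 1 := by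
              have h9 := mdeg_support_pair (u := w_c) (x := b₀) (z := z)
                (fun h => hzb h.symm) hwczero
              omega
            by_cases hcz : c = z
            · -- m' = m y_c, head
              left
              have hm'w : ∀ j, m' j = w_c j + sgl c j :=
                fun j => (congrFun (sub_add_sgl hc1) j).symm
              have heqm : m' = C.m y_c := by
                funext j
                rw [hm'w j]
                by_cases hjb : j = b₀
                · rw [hjb, hmb1, hwcb1, show sgl c b₀ = 0 by
                    rw [sgl_apply, if_neg (fun h : b₀ = c => hcb h.symm)]]
                · by_cases hjz : j = z
                  · rw [hjz, hmze, hwcz, hcz, show sgl z z = 1 by simp]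
                    omega
                  · rw [hmzero j hjb hjz, hwczero j hjb hjz, show sgl c j = 0 by
                      rw [sgl_apply, if_neg (fun h : j = c => hjz (h.trans hcz))]]
              exact ⟨y_c, hycV, ⟨b₀, hb₀V, hrb₀c⟩, heqm⟩
            · -- contradiction via m' - sgl z
              exfalso
              have hm'w : ∀ j, m' j = w_c j + sgl c j :=
                fun j => (congrFun (sub_add_sgl hc1) j).symm
              have hm'z : m' z = e - 1 := by
                rw [hm'w z, hwcz, show sgl c z = 0 by
                  rw [sgl_apply, if_neg (fun h : z = c => hcz h.symm)]]
                omega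
              have hm'b1 : m' b₀ = 1 := by rw [← hwcb₀, hwcb1]
              have hm'c : m' c = 1 := by
                have h1 : w_c c = m' c - 1 := sub_sgl_self m' c
                have h2 : w_c c = 0 := hwczero c hcb hcz
                have h3 : 1 ≤ m' c := hc1
                omega
              have hm'z1 : 1 ≤ m' z := by omega
              set w_z := m' - sgl z with hwzdef
              have hwzlvl : w_z ∈ lvl A e := sub_mem_lvl hcl hm' hm'z1
              obtain ⟨y'', hy''V, hle'', u'', hu''V, hru'', hpos''⟩ := cmp_exists C heq hwzlvl
              have hwzb : w_z b₀ = 1 := by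
                have h9 : w_z b₀ = m' b₀ := sub_sgl_other m' (fun h : b₀ = z => hzb h.symm)
                omega
              have hwzc : w_z c = 1 := by
                have h9 : w_z c = m' c := sub_sgl_other m' hcz
                omega
              have hwzzero : ∀ j, j ≠ b₀ → j ≠ z → j ≠ c → w_z j = 0 := by
                intro j h1 h2 h3
                have h9 : w_z j = m' j := sub_sgl_other m' h2
                have h10 : m' j = w_c j + sgl c j := hm'w j
                have h11 : w_c j = 0 := hwczero j h1 h2
                have h12 : sgl c j = 0 := by rw [sgl_apply, if_neg h3]
                omega
              have hu''cases : u'' = b₀ ∨ u'' = z ∨ u'' = c := by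
                by_contra hcc
                push_neg at hcc
                have := hwzzero u'' hcc.1 hcc.2.1 hcc.2.2
                omega
              rcases hu''cases with h | h | h
              · rw [h] at hru''
                have hyy : y'' = y_c := by rw [← hru'', hrb₀c]
                have h5 : w_z c ≤ C.m y'' c := hle'' c
                rw [hyy] at h5
                have h6 := hmzero c hcb hcz
                omega
              · rw [h] at hru''
                obtain ⟨hzV, htail⟩ :=
                  eshape_tail C hcl heq (by omega) hycV hzb hmb1 hmze hmzero
                have h5 : w_z b₀ ≤ C.m y'' b₀ := hle'' b₀
                have h6 : w_z c ≤ C.m y'' c := hle'' c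
                have h7 : e ≤ C.m y'' z := by rw [← hru'']; exact htail
                have h8 := three_coords_le_mdeg (u := C.m y'') (a := z) (b := b₀) (c := c)
                  hzb (fun hh => hcz hh.symm) (fun hh => hcb hh.symm)
                rw [C.hmdeg y'' hy''V] at h8
                omega
              · rw [h] at hru''
                have h5 : C.r c = y₀ := hsm' c hc1 hcb
                have hyy : y'' = y₀ := by rw [← hru'', h5]
                have h6 : w_z b₀ ≤ C.m y'' b₀ := hle'' b₀
                rw [hyy] at h6
                have h7 : C.r b₀ = y₀ := (hsupp b₀ (by omega)).2
                rw [hrb₀c] at h7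
                exact hyc h7
  · -- ===== SMALL component case =====
    have hu₀T : u₀ ∈ Tof C (y₀) := mem_Tof.2 ⟨hu₀V, hru₀⟩
    have hsmall0 : ∀ k ∈ Vset A, C.r k = y₀ → k = u₀ := by
      intro k hk hrk
      push_neg at hbig
      exact Finset.card_le_one.1 (by omega) k (mem_Tof.2 ⟨hk, hrk⟩) u₀ hu₀T
    rcases small_shape C hcl heq (by omega) hy₀V hu₀T hsmall0 with
      hS | ⟨z₀, hz₀x, hm1, hmz, hzero⟩
    · -- S shape : m y₀ is a pure power of u₀
      have hmyu : C.m y₀ u₀ = e + 1 := by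
        have := mdeg_support_single hS
        have h2 := C.hmdeg y₀ hy₀V
        omega
      have hw₀zero : ∀ j, j ≠ u₀ → w₀ j = 0 := by
        intro j hj
        have h1 : w₀ j ≤ C.m y₀ j := hw₀le j
        have := hS j hj
        omega
      have hw₀u : w₀ u₀ = e := by
        have := mdeg_support_single hw₀zero
        omega
      have hm'w : ∀ j, m' j = w₀ j + sgl b₀ j :=
        fun j => (congrFun (sub_add_sgl hb₀) j).symm
      by_cases hbx : b₀ = u₀
      · left
        have heqm : m' = C.m y₀ := by
          funext j
          rw [hm'w j]
          by_cases hj : j = u₀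
          · rw [hj, hw₀u, hmyu, show sgl b₀ u₀ = 1 by rw [hbx]; simp]
          · rw [hw₀zero j hj, hS j hj, show sgl b₀ j = 0 by
              rw [sgl_apply, if_neg (fun h : j = b₀ => hj (h.trans hbx))]]
        exact ⟨y₀, hy₀V, ⟨u₀, hu₀V, hru₀⟩, heqm⟩
      · -- a pure power with one extra variable on top of an S component
        have hm'u : m' u₀ = e := by
          rw [hm'w u₀, hw₀u, show sgl b₀ u₀ = 0 by
            rw [sgl_apply, if_neg (fun h : u₀ = b₀ => hbx h.symm)]]
          omega
        have hm'b1 : m' b₀ = 1 := by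
          rw [hm'w b₀, hw₀zero b₀ hbx, show sgl b₀ b₀ = 1 by simp]
        have hm'zero : ∀ j, j ≠ u₀ → j ≠ b₀ → m' j = 0 := by
          intro j h1 h2
          rw [hm'w j, hw₀zero j h1, show sgl b₀ j = 0 by rw [sgl_apply, if_neg h2]]
        set w_x := m' - sgl u₀ with hwxdef
        have hwxlvl : w_x ∈ lvl A e := sub_mem_lvl hcl hm' (by omega)
        obtain ⟨y'', hy''V, hle'', u'', hu''V, hru'', hpos''⟩ := cmp_exists C heq hwxlvl
        have hwxu : w_x u₀ = e - 1 := by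
          have h9 : w_x u₀ = m' u₀ - 1 := sub_sgl_self m' u₀
          omega
        have hwxb : w_x b₀ = 1 := by
          have h9 : w_x b₀ = m' b₀ := sub_sgl_other m' hbx
          omega
        have hwxzero : ∀ j, j ≠ u₀ → j ≠ b₀ → w_x j = 0 := by
          intro j h1 h2
          have h9 : w_x j = m' j := sub_sgl_other m' h1
          have h10 := hm'zero j h1 h2
          omega
        have hu''cases : u'' = u₀ ∨ u'' = b₀ := by
          by_contra hcc
          push_neg at hcc
          have := hwxzero u'' hcc.1 hcc.2
          omega
        rcases hu''cases with h | h
        · exfalso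
          rw [h] at hru''
          have hyy : y'' = y₀ := by rw [← hru'', hru₀]
          have h5 : w_x b₀ ≤ C.m y'' b₀ := hle'' b₀
          rw [hyy] at h5
          have := hS b₀ hbx
          omega
        · rw [h] at hru''
          have h1 : 1 ≤ C.m y'' u₀ := by
            have h5 : w_x u₀ ≤ C.m y'' u₀ := hle'' u₀
            omega
          by_cases hbig'' : 2 ≤ (Tof C y'').card
          · exfalso
            have h2 := (big_supp C hcl heq hy''V hbig'' h1).2
            have hyy : y'' = y₀ := by rw [← h2, hru₀]
            rw [hyy] at hru''
            exact hbx (hsmall0 b₀ hb₀V hru'')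
          · have hb₀T'' : b₀ ∈ Tof C y'' := mem_Tof.2 ⟨hb₀V, hru''⟩
            have hsmall'' : ∀ k ∈ Vset A, C.r k = y'' → k = b₀ := by
              intro k hk hrk
              push_neg at hbig''
              exact Finset.card_le_one.1 (by omega) k (mem_Tof.2 ⟨hk, hrk⟩) b₀ hb₀T''
            rcases small_shape C hcl heq (by omega) hy''V hb₀T'' hsmall'' with
              hS'' | ⟨z'', hz''b, hm1'', hmz'', hzero''⟩
            · exfalso
              have := hS'' u₀ (fun h => hbx h.symm)
              omega
            · -- m' = m y'' (an E head)
              left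
              have hz''u : z'' = u₀ := by
                by_contra hne
                have := hzero'' u₀ (fun h => hbx h.symm) (fun h => hne h.symm)
                omega
              have heqm : m' = C.m y'' := by
                funext j
                by_cases hjb : j = b₀
                · rw [hjb, hm'b1, hm1'']
                · by_cases hju : j = u₀
                  · rw [hju, hm'u, ← hz''u, hmz'']
                  · rw [hm'zero j hju hjb, hzero'' j hjb (by rw [hz''u]; exact hju)]
              exact ⟨y'', hy''V, ⟨b₀, hb₀V, hru''⟩, heqm⟩
    · -- E shape : m y₀ = u₀ + (e)·z₀
      have hw₀u1 : w₀ u₀ = 1 := by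
        have h1 : w₀ u₀ ≤ C.m y₀ u₀ := hw₀le u₀
        omega
      have hw₀zero : ∀ j, j ≠ u₀ → j ≠ z₀ → w₀ j = 0 := by
        intro j h1 h2
        have h3 : w₀ j ≤ C.m y₀ j := hw₀le j
        have := hzero j h1 h2
        omega
      have hw₀z : w₀ z₀ = e - 1 := by
        have h9 := mdeg_support_pair (u := w₀) (x := u₀) (z := z₀)
          (fun h => hz₀x h.symm) hw₀zero
        omega
      have hm'w : ∀ j, m' j = w₀ j + sgl b₀ j :=
        fun j => (congrFun (sub_add_sgl hb₀) j).symm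
      by_cases hbz : b₀ = z₀
      · -- m' = m y₀, head
        left
        have heqm : m' = C.m y₀ := by
          funext j
          rw [hm'w j]
          by_cases hju : j = u₀
          · rw [hju, hw₀u1, hm1, show sgl b₀ u₀ = 0 by
              rw [sgl_apply, if_neg (fun h : u₀ = b₀ => hz₀x (h.trans hbz).symm)]]
          · by_cases hjz : j = z₀
            · rw [hjz, hw₀z, hmz, show sgl b₀ z₀ = 1 by rw [hbz]; simp]
              omega
            · rw [hw₀zero j hju hjz, hzero j hju hjz, show sgl b₀ j = 0 by
                rw [sgl_apply, if_neg (fun h : j = b₀ => hjz (h.trans hbz))]]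
        exact ⟨y₀, hy₀V, ⟨u₀, hu₀V, hru₀⟩, heqm⟩
      · by_cases hbx : b₀ = u₀
        · -- m' = 2·u₀ + (e-1)·z₀ : contradiction
          exfalso
          have hm'u : m' u₀ = 2 := by
            rw [hm'w u₀, hw₀u1, show sgl b₀ u₀ = 1 by rw [hbx]; simp]
          have hm'z : m' z₀ = e - 1 := by
            rw [hm'w z₀, hw₀z, show sgl b₀ z₀ = 0 by
              rw [sgl_apply, if_neg (fun h : z₀ = b₀ => hbz h.symm)]]
            omega
          have hm'zero : ∀ j, j ≠ u₀ → j ≠ z₀ → m' j = 0 := by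
            intro j h1 h2
            rw [hm'w j, hw₀zero j h1 h2, show sgl b₀ j = 0 by
              rw [sgl_apply, if_neg (fun h : j = b₀ => h1 (h.trans hbx))]]
          set w_z := m' - sgl z₀ with hwzdef
          have hwzlvl : w_z ∈ lvl A e := sub_mem_lvl hcl hm' (by omega)
          obtain ⟨y'', hy''V, hle'', u'', hu''V, hru'', hpos''⟩ := cmp_exists C heq hwzlvl
          have hwzu : w_z u₀ = 2 := by
            have h9 : w_z u₀ = m' u₀ := sub_sgl_other m' (fun h : u₀ = z₀ => hz₀x h.symm)
            omega
          have hwzzero : ∀ j, j ≠ u₀ → j ≠ z₀ → w_z j = 0 := by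
            intro j h1 h2
            have h9 : w_z j = m' j := sub_sgl_other m' h2
            have h10 := hm'zero j h1 h2
            omega
          have hu''cases : u'' = u₀ ∨ u'' = z₀ := by
            by_contra hcc
            push_neg at hcc
            have := hwzzero u'' hcc.1 hcc.2
            omega
          rcases hu''cases with h | h
          · rw [h] at hru''
            have hyy : y'' = y₀ := by rw [← hru'', hru₀]
            have h5 : w_z u₀ ≤ C.m y'' u₀ := hle'' u₀
            rw [hyy] at h5
            omega
          · rw [h] at hru''
            obtain ⟨hz₀V, htail⟩ :=
              eshape_tail C hcl heq (by omega) hy₀V hz₀x hm1 hmz hzero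
            have h7 : e ≤ C.m y'' z₀ := by rw [← hru'']; exact htail
            have h5 : w_z u₀ ≤ C.m y'' u₀ := hle'' u₀
            have h8 := two_coords_le_mdeg (u := C.m y'') (a := z₀) (b := u₀) hz₀x
            rw [C.hmdeg y'' hy''V] at h8
            omega
        · -- b₀ ∉ {u₀, z₀} : m' = u₀ + (e-1)·z₀ + b₀
          have hm'u : m' u₀ = 1 := by
            rw [hm'w u₀, hw₀u1, show sgl b₀ u₀ = 0 by
              rw [sgl_apply, if_neg (fun h : u₀ = b₀ => hbx h.symm)]]
          have hm'z : m' z₀ = e - 1 := by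
            rw [hm'w z₀, hw₀z, show sgl b₀ z₀ = 0 by
              rw [sgl_apply, if_neg (fun h : z₀ = b₀ => hbz h.symm)]]
            omega
          have hm'b1 : m' b₀ = 1 := by
            rw [hm'w b₀, hw₀zero b₀ hbx hbz, show sgl b₀ b₀ = 1 by simp]
          have hm'zero : ∀ j, j ≠ u₀ → j ≠ z₀ → j ≠ b₀ → m' j = 0 := by
            intro j h1 h2 h3
            rw [hm'w j, hw₀zero j h1 h2, show sgl b₀ j = 0 by rw [sgl_apply, if_neg h3]]
          exfalso
          set w_z := m' - sgl z₀ with hwzdef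
          have hwzlvl : w_z ∈ lvl A e := sub_mem_lvl hcl hm' (by omega)
          obtain ⟨y'', hy''V, hle'', u'', hu''V, hru'', hpos''⟩ := cmp_exists C heq hwzlvl
          have hwzu : w_z u₀ = 1 := by
            have h9 : w_z u₀ = m' u₀ := sub_sgl_other m' (fun h : u₀ = z₀ => hz₀x h.symm)
            omega
          have hwzb : w_z b₀ = 1 := by
            have h9 : w_z b₀ = m' b₀ := sub_sgl_other m' hbz
            omega
          have hwzzero : ∀ j, j ≠ u₀ → j ≠ z₀ → j ≠ b₀ → w_z j = 0 := by
            intro j h1 h2 h3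
            have h9 : w_z j = m' j := sub_sgl_other m' h2
            have h10 := hm'zero j h1 h2 h3
            omega
          have hu''cases : u'' = u₀ ∨ u'' = z₀ ∨ u'' = b₀ := by
            by_contra hcc
            push_neg at hcc
            have := hwzzero u'' hcc.1 hcc.2.1 hcc.2.2
            omega
          obtain ⟨hz₀V, htail⟩ :=
            eshape_tail C hcl heq (by omega) hy₀V hz₀x hm1 hmz hzero
          rcases hu''cases with h | h | h
          · rw [h] at hru''
            have hyy : y'' = y₀ := by rw [← hru'', hru₀]
            have h5 : w_z b₀ ≤ C.m y'' b₀ := hle'' b₀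
            rw [hyy] at h5
            have := hzero b₀ hbx hbz
            omega
          · rw [h] at hru''
            have h7 : e ≤ C.m y'' z₀ := by rw [← hru'']; exact htail
            have h5 : w_z u₀ ≤ C.m y'' u₀ := hle'' u₀
            have h6 : w_z b₀ ≤ C.m y'' b₀ := hle'' b₀
            have h8 := three_coords_le_mdeg (u := C.m y'') (a := z₀) (b := u₀) (c := b₀)
              hz₀x (fun hh => hbz hh.symm) (fun hh => hbx hh.symm)
            rw [C.hmdeg y'' hy''V] at h8
            omega
          · rw [h] at hru''
            have h1 : 1 ≤ C.m y'' u₀ := by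
              have h5 : w_z u₀ ≤ C.m y'' u₀ := hle'' u₀
              omega
            by_cases hbig'' : 2 ≤ (Tof C y'').card
            · have h2 := (big_supp C hcl heq hy''V hbig'' h1).2
              have hyy : y'' = y₀ := by rw [← h2, hru₀]
              rw [hyy] at hru''
              exact hbx (hsmall0 b₀ hb₀V hru'')
            · have hb₀T'' : b₀ ∈ Tof C y'' := mem_Tof.2 ⟨hb₀V, hru''⟩
              have hsmall'' : ∀ k ∈ Vset A, C.r k = y'' → k = b₀ := by
                intro k hk hrk
                push_neg at hbig''
                exact Finset.card_le_one.1 (by omega) k (mem_Tof.2 ⟨hk, hrk⟩) b₀ hb₀T''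
              rcases small_shape C hcl heq (by omega) hy''V hb₀T'' hsmall'' with
                hS'' | ⟨z'', hz''b, hm1'', hmz'', hzero''⟩
              · have := hS'' u₀ (fun h => hbx h.symm)
                omega
              · have hz''u : z'' = u₀ := by
                  by_contra hne
                  have := hzero'' u₀ (fun h => hbx h.symm) (fun h => hne h.symm)
                  omega
                obtain ⟨hu₀V', htail''⟩ :=
                  eshape_tail C hcl heq (by omega) hy''V hz''b hm1'' hmz'' hzero''
                rw [hz''u, hru₀] at htail''
                omega

end StmtAux

namespace StmtAux

open Finset
open scoped Classical

variable {s : ℕ} {A : Finset (Fin s → ℕ)} {e : ℕ}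

/-- the collection of monomials of degree `e+1` assigned to component `y` -/
noncomputable def Ey (C : Cfg A e) (A' : Finset (Fin s → ℕ)) (y : Fin s) :
    Finset (Fin s → ℕ) :=
  A'.filter (fun m' => m' = C.m y ∨
    ∃ b, b ∈ Vset A ∧ C.r b = y ∧ e ≤ C.m y b ∧ ∀ j, j ≠ b → m' j = 0)

lemma Ey_cover (C : Cfg A e)
    (hcl : ∀ u ∈ A, ∀ v : Fin s → ℕ, v ≤ u → v ∈ A)
    (heq : (lvl A e).card ≤ (Vset A).card) (he2 : 2 ≤ e) :
    lvl A (e+1) ⊆ ((Vset A).image C.r).biUnion (Ey C (lvl A (e+1))) := by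
  intro m' hm'
  rcases classification C hcl heq he2 m' hm' with
    ⟨y, hyV, ⟨u, huV, hru⟩, heqm⟩ | ⟨b, hbV, hzero, hbe, hbig⟩
  · refine Finset.mem_biUnion.2 ⟨y, Finset.mem_image.2 ⟨u, huV, hru⟩, ?_⟩
    rw [Ey, Finset.mem_filter]
    exact ⟨hm', Or.inl heqm⟩
  · refine Finset.mem_biUnion.2 ⟨C.r b, Finset.mem_image.2 ⟨b, hbV, rfl⟩, ?_⟩
    rw [Ey, Finset.mem_filter]
    exact ⟨hm', Or.inr ⟨b, hbV, rfl, hbe, hzero⟩⟩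

lemma Ey_card (C : Cfg A e)
    (hcl : ∀ u ∈ A, ∀ v : Fin s → ℕ, v ≤ u → v ∈ A)
    (heq : (lvl A e).card ≤ (Vset A).card) (he2 : 2 ≤ e) :
    ∀ y ∈ (Vset A).image C.r, (Ey C (lvl A (e+1)) y).card ≤ (Tof C y).card := by
  intro y hy
  obtain ⟨u₁, hu₁V, hru₁⟩ := Finset.mem_image.1 hy
  have hu₁T : u₁ ∈ Tof C y := mem_Tof.2 ⟨hu₁V, hru₁⟩
  have hyV : y ∈ Vset A := hru₁ ▸ C.hrV u₁ hu₁V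
  have hTpos : 1 ≤ (Tof C y).card := Finset.card_pos.2 ⟨u₁, hu₁T⟩
  -- any member of `Ey` is either the head or a pure power with a constrained base
  have hmem : ∀ m' ∈ Ey C (lvl A (e+1)) y, m' = C.m y ∨
      ∃ b, b ∈ Vset A ∧ C.r b = y ∧ e ≤ C.m y b ∧ m' = fun j => if j = b then e + 1 else 0 := by
    intro m' hm'
    rw [Ey, Finset.mem_filter] at hm'
    rcases hm'.2 with h | ⟨b, hbV, hrb, hbe, hzero⟩
    · exact Or.inl h
    · right
      refine ⟨b, hbV, hrb, hbe, ?_⟩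
      have hd : mdeg m' = e + 1 := (mem_lvl.1 hm'.1).2
      have hb : m' b = e + 1 := by
        have := mdeg_support_single hzero
        omega
      funext j
      by_cases hj : j = b
      · rw [hj, if_pos rfl, hb]
      · rw [if_neg hj]
        exact hzero j hj
  by_cases hbig : 2 ≤ (Tof C y).card
  · -- at most two elements : the head and (at most one) pure power
    have hbuniq : ∀ b b', b ∈ Vset A → C.r b = y → e ≤ C.m y b →
        b' ∈ Vset A → C.r b' = y → e ≤ C.m y b' → b = b' := by
      intro b b' _ _ hbe _ _ hbe'
      by_contra hne
      have h1 := two_coords_le_mdeg (u := C.m y) (a := b) (b := b') hne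
      rw [C.hmdeg y hyV] at h1
      omega
    by_cases hex : ∃ b, b ∈ Vset A ∧ C.r b = y ∧ e ≤ C.m y b
    · obtain ⟨b₁, hb₁V, hrb₁, hb₁e⟩ := hex
      have hsub : Ey C (lvl A (e+1)) y ⊆
          {C.m y, (fun j => if j = b₁ then e + 1 else 0)} := by
        intro m' hm'
        rcases hmem m' hm' with h | ⟨b, hbV, hrb, hbe, hform⟩
        · simp [h]
        · have : b = b₁ := hbuniq b b₁ hbV hrb hbe hb₁V hrb₁ hb₁e
          rw [this] at hform
          simp [hform]
      calc (Ey C (lvl A (e+1)) y).card ≤ _ := Finset.card_le_card hsub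
        _ ≤ 2 := Finset.card_insert_le _ _ |>.trans (by simp)
        _ ≤ (Tof C y).card := hbig
    · have hsub : Ey C (lvl A (e+1)) y ⊆ {C.m y} := by
        intro m' hm'
        rcases hmem m' hm' with h | ⟨b, hbV, hrb, hbe, _⟩
        · simp [h]
        · exact absurd ⟨b, hbV, hrb, hbe⟩ hex
      calc (Ey C (lvl A (e+1)) y).card ≤ 1 := by
            simpa using Finset.card_le_card hsub
        _ ≤ (Tof C y).card := hTpos
  · -- small component : only the head
    have hsmall : ∀ k ∈ Vset A, C.r k = y → k = u₁ := by
      intro k hk hrk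
      push_neg at hbig
      exact Finset.card_le_one.1 (by omega) k (mem_Tof.2 ⟨hk, hrk⟩) u₁ hu₁T
    have hsub : Ey C (lvl A (e+1)) y ⊆ {C.m y} := by
      intro m' hm'
      rcases hmem m' hm' with h | ⟨b, hbV, hrb, hbe, hform⟩
      · simp [h]
      · -- b is the unique component element; shapes
        have hbu : b = u₁ := hsmall b hbV hrb
        have hbT : b ∈ Tof C y := mem_Tof.2 ⟨hbV, hrb⟩
        rcases small_shape C hcl heq (by omega) hyV hbT (by rw [hbu]; exact hsmall) with
          hS | ⟨z, hzb, hb1, hze, hzero⟩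
        · -- m y is also the pure power of b
          have hd : C.m y b = e + 1 := by
            have := mdeg_support_single hS
            have h2 := C.hmdeg y hyV
            omega
          have : m' = C.m y := by
            rw [hform]
            funext j
            by_cases hj : j = b
            · rw [hj, if_pos rfl, hd]
            · rw [if_neg hj, hS j hj]
          simp [this]
        · omega
    calc (Ey C (lvl A (e+1)) y).card ≤ 1 := by
          simpa using Finset.card_le_card hsub
      _ ≤ (Tof C y).card := hTpos

lemma sum_Tof (C : Cfg A e) :
    ∑ y ∈ (Vset A).image C.r, (Tof C y).card = (Vset A).card := by
  rw [Finset.card_eq_sum_card_fiberwise (f := C.r) (t := (Vset A).image C.r)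
    (fun x hx => Finset.mem_image.2 ⟨x, hx, rfl⟩)]
  rfl

/-- LU : the level above an equality level has at most `|V|` monomials. -/
lemma LU (C : Cfg A e)
    (hcl : ∀ u ∈ A, ∀ v : Fin s → ℕ, v ≤ u → v ∈ A)
    (heq : (lvl A e).card ≤ (Vset A).card) (he2 : 2 ≤ e) :
    (lvl A (e+1)).card ≤ (Vset A).card := by
  calc (lvl A (e+1)).card
      ≤ (((Vset A).image C.r).biUnion (Ey C (lvl A (e+1)))).card :=
        Finset.card_le_card (Ey_cover C hcl heq he2)
    _ ≤ ∑ y ∈ (Vset A).image C.r, (Ey C (lvl A (e+1)) y).card :=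
        Finset.card_biUnion_le
    _ ≤ ∑ y ∈ (Vset A).image C.r, (Tof C y).card :=
        Finset.sum_le_sum (Ey_card C hcl heq he2)
    _ = (Vset A).card := sum_Tof C

end StmtAux

namespace StmtAux

open Finset
open scoped Classical

variable {s : ℕ} {A : Finset (Fin s → ℕ)} {e : ℕ}

/-- LK2 : under a double equality, the level below an equality level has at
most `|V|` monomials. -/
lemma LK2 (C : Cfg A e)
    (hcl : ∀ u ∈ A, ∀ v : Fin s → ℕ, v ≤ u → v ∈ A)
    (hne : A.Nonempty) (hpu : IsPure A)
    (heq : (lvl A e).card ≤ (Vset A).card)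
    (hfull : (Vset A).card ≤ (lvl A (e+1)).card)
    (he2 : 2 ≤ e) (hen : e + 1 ≤ topDegree A) :
    (lvl A (e-1)).card ≤ (Vset A).card := by
  -- every component is full in `Ey`
  have hsum1 : (Vset A).card ≤ ∑ y ∈ (Vset A).image C.r, (Ey C (lvl A (e+1)) y).card :=
    le_trans hfull (le_trans (Finset.card_le_card (Ey_cover C hcl heq he2))
      Finset.card_biUnion_le)
  have hsum2 : ∑ y ∈ (Vset A).image C.r, (Ey C (lvl A (e+1)) y).card
      ≤ ∑ y ∈ (Vset A).image C.r, (Tof C y).card :=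
    Finset.sum_le_sum (Ey_card C hcl heq he2)
  have hEyfull : ∀ y ∈ (Vset A).image C.r,
      (Ey C (lvl A (e+1)) y).card = (Tof C y).card := by
    have hsumE : ∑ y ∈ (Vset A).image C.r, (Ey C (lvl A (e+1)) y).card
        = ∑ y ∈ (Vset A).image C.r, (Tof C y).card := by
      have := sum_Tof C
      omega
    exact (Finset.sum_eq_sum_iff_of_le (Ey_card C hcl heq he2)).1 hsumE
  -- shape dictionary
  have hshape : ∀ y ∈ (Vset A).image C.r,
      (∃ b z, b ≠ z ∧ b ∈ Vset A ∧ z ∈ Vset A ∧ C.r b = y ∧ C.r z = y ∧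
        C.m y b = e ∧ C.m y z = 1 ∧ (∀ j, j ≠ b → j ≠ z → C.m y j = 0) ∧
        (Tof C y).card = 2) ∨
      (∃ x, x ∈ Vset A ∧ C.r x = y ∧ (∀ k ∈ Vset A, C.r k = y → k = x) ∧
        C.m y x = e + 1 ∧ (∀ j, j ≠ x → C.m y j = 0)) ∨
      (∃ x z, z ≠ x ∧ x ∈ Vset A ∧ C.r x = y ∧ (∀ k ∈ Vset A, C.r k = y → k = x) ∧
        C.m y x = 1 ∧ C.m y z = e ∧ (∀ j, j ≠ x → j ≠ z → C.m y j = 0)) := by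
    intro y hy
    obtain ⟨u₁, hu₁V, hru₁⟩ := Finset.mem_image.1 hy
    have hu₁T : u₁ ∈ Tof C y := mem_Tof.2 ⟨hu₁V, hru₁⟩
    have hyV : y ∈ Vset A := hru₁ ▸ C.hrV u₁ hu₁V
    by_cases hbig : 2 ≤ (Tof C y).card
    · -- P2 shape
      left
      have hsupp : ∀ j, 1 ≤ C.m y j → j ∈ Vset A ∧ C.r j = y :=
        fun j hj => big_supp C hcl heq hyV hbig hj
      -- the pure power must exist
      have hex : ∃ b, b ∈ Vset A ∧ C.r b = y ∧ e ≤ C.m y b := by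
        by_contra hexn
        have hsub : Ey C (lvl A (e+1)) y ⊆ {C.m y} := by
          intro m' hm'
          rw [Ey, Finset.mem_filter] at hm'
          rcases hm'.2 with h | ⟨b, hbV, hrb, hbe, _⟩
          · simp [h]
          · exact absurd ⟨b, hbV, hrb, hbe⟩ hexn
        have h1 : (Ey C (lvl A (e+1)) y).card ≤ 1 := by
          simpa using Finset.card_le_card hsub
        have h2 := hEyfull y hy
        omega
      obtain ⟨b, hbV, hrb, hbe⟩ := hex
      have hd := C.hmdeg y hyV
      -- m y b = e (not e+1)
      have hmb : C.m y b = e := by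
        rcases Nat.lt_or_ge (C.m y b) (e+1) with h | h
        · omega
        · exfalso
          have hzero : ∀ j, j ≠ b → C.m y j = 0 := by
            intro j hj
            by_contra hc
            have := two_coords_le_mdeg (u := C.m y) (a := j) (b := b) hj
            omega
          have hT1 : Tof C y ⊆ {b} := by
            intro k hk
            have := Tof_pos hk
            by_contra hkb
            have := hzero k (by simpa using hkb)
            omega
          have := Finset.card_le_card hT1
          simp at this
          omega
      have hzex : ∃ z, z ≠ b ∧ 1 ≤ C.m y z := by
        by_contra hc
        push_neg at hc
        have hzero : ∀ j, j ≠ b → C.m y j = 0 := fun j hj => by have := hc j hj; omega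
        have := mdeg_support_single hzero
        omega
      obtain ⟨z, hzb, hz1⟩ := hzex
      have hzero : ∀ j, j ≠ b → j ≠ z → C.m y j = 0 := by
        intro j h1 h2
        by_contra hc
        have := three_coords_le_mdeg (u := C.m y) (a := j) (b := b) (c := z) h1 h2
          (fun h => hzb h.symm)
        omega
      have hmz : C.m y z = 1 := by
        have := mdeg_support_pair (u := C.m y) (x := b) (z := z)
          (fun h => hzb h.symm) hzero
        omega
      have hzV := hsupp z (by omega)
      -- Tof C y = {b, z}
      have hcard2 : (Tof C y).card = 2 := by
        have hsub : Tof C y ⊆ {b, z} := by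
          intro k hk
          have h1 := Tof_pos hk
          by_contra hkm
          simp only [Finset.mem_insert, Finset.mem_singleton] at hkm
          push_neg at hkm
          have := hzero k hkm.1 hkm.2
          omega
        have h2 := Finset.card_le_card hsub
        have h3 : ({b, z} : Finset (Fin s)).card ≤ 2 :=
          (Finset.card_insert_le _ _).trans (by simp)
        omega
      exact ⟨b, z, Ne.symm hzb, hbV, hzV.1, hrb, hzV.2, hmb, hmz, hzero, hcard2⟩
    · -- small component
      have hsmall : ∀ k ∈ Vset A, C.r k = y → k = u₁ := by
        intro k hk hrk
        push_neg at hbig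
        exact Finset.card_le_one.1 (by omega) k (mem_Tof.2 ⟨hk, hrk⟩) u₁ hu₁T
      rcases small_shape C hcl heq (by omega) hyV hu₁T hsmall with
        hS | ⟨z, hzx, h1, hze, h0⟩
      · right; left
        have hd : C.m y u₁ = e + 1 := by
          have := mdeg_support_single hS
          have h2 := C.hmdeg y hyV
          omega
        exact ⟨u₁, hu₁V, hru₁, hsmall, hd, hS⟩
      · right; right
        exact ⟨u₁, z, hzx, hu₁V, hru₁, hsmall, h1, hze, h0⟩
  -- the D sets
  set Dy : Fin s → Finset (Fin s → ℕ) := fun y =>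
    (lvl A (e-1)).filter (fun w' => w' ≤ C.m y ∧ ∃ v, v ∈ Vset A ∧ C.r v = y ∧ 1 ≤ w' v)
    with hDydef
  -- coverage
  have hcov : lvl A (e-1) ⊆ ((Vset A).image C.r).biUnion Dy := by
    intro w' hw'
    have hw'd : mdeg w' = e - 1 := (mem_lvl.1 hw').2
    obtain ⟨w, hw, hle0⟩ := shadow_chain hcl hne hpu hw' (by omega)
    rw [show e - 1 + 1 = e by omega] at hw
    have hwd : mdeg w = e := (mem_lvl.1 hw).2
    obtain ⟨y₁, hy₁V, hwle, v₁, hv₁V, hrv₁, hwv₁⟩ := cmp_exists C heq hw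
    have hy₁img : y₁ ∈ (Vset A).image C.r := Finset.mem_image.2 ⟨v₁, hv₁V, hrv₁⟩
    have hle1 : w' ≤ C.m y₁ := le_trans hle0 hwle
    obtain ⟨j₀, hj₀⟩ := exists_pos_of_mdeg_pos (u := w') (by omega)
    have hj₀m : 1 ≤ C.m y₁ j₀ := le_trans hj₀ (hle1 j₀)
    rcases hshape y₁ hy₁img with
      ⟨b, z, hbz, hbV, hzV, hrb, hrz, hmb, hmz, hzero, _⟩ |
      ⟨x, hxV, hrx, hsmall, hmx, hS⟩ |
      ⟨x, z, hzx, hxV, hrx, hsmall, hmx1, hmze, h0⟩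
    · -- P2 : j₀ ∈ {b, z}
      have hj₀bz : j₀ = b ∨ j₀ = z := by
        by_contra hc
        push_neg at hc
        have := hzero j₀ hc.1 hc.2
        omega
      refine Finset.mem_biUnion.2 ⟨y₁, hy₁img, ?_⟩
      rw [hDydef]
      simp only [Finset.mem_filter]
      refine ⟨hw', hle1, ?_⟩
      rcases hj₀bz with h | h
      · exact ⟨b, hbV, hrb, by rw [← h]; exact hj₀⟩
      · exact ⟨z, hzV, hrz, by rw [← h]; exact hj₀⟩
    · -- S : j₀ = x
      have hj₀x : j₀ = x := by
        by_contra hc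
        have := hS j₀ hc
        omega
      refine Finset.mem_biUnion.2 ⟨y₁, hy₁img, ?_⟩
      rw [hDydef]
      simp only [Finset.mem_filter]
      exact ⟨hw', hle1, x, hxV, hrx, by rw [← hj₀x]; exact hj₀⟩
    · -- E : j₀ ∈ {x, z}
      have hj₀xz : j₀ = x ∨ j₀ = z := by
        by_contra hc
        push_neg at hc
        have := h0 j₀ hc.1 hc.2
        omega
      by_cases hwx : 1 ≤ w' x
      · refine Finset.mem_biUnion.2 ⟨y₁, hy₁img, ?_⟩
        rw [hDydef]
        simp only [Finset.mem_filter]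
        exact ⟨hw', hle1, x, hxV, hrx, hwx⟩
      · -- w' is supported on z only : goes to the component of z
        have hj₀z : j₀ = z := by
          rcases hj₀xz with h | h
          · exfalso; rw [h] at hj₀; omega
          · exact h
        obtain ⟨hzV, htail⟩ := eshape_tail C hcl heq (by omega) hy₁V hzx hmx1 hmze h0
        have hw'zero : ∀ j, j ≠ z → w' j = 0 := by
          intro j hj
          by_cases hjx : j = x
          · rw [hjx]; omega
          · have h2 : w' j ≤ C.m y₁ j := hle1 j
            have := h0 j hjx hj
            omega
        have hw'z : w' z = e - 1 := by
          have := mdeg_support_single hw'zero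
          omega
        refine Finset.mem_biUnion.2 ⟨C.r z, Finset.mem_image.2 ⟨z, hzV, rfl⟩, ?_⟩
        rw [hDydef]
        simp only [Finset.mem_filter]
        refine ⟨hw', ?_, z, hzV, rfl, by omega⟩
        rw [Pi.le_def]
        intro j
        by_cases hj : j = z
        · rw [hj]
          have h9 : e ≤ C.m (C.r z) z := htail
          omega
        · rw [hw'zero j hj]; omega
  -- size bound per component
  have hsize : ∀ y ∈ (Vset A).image C.r, (Dy y).card ≤ (Tof C y).card := by
    intro y hy
    obtain ⟨u₁, hu₁V, hru₁⟩ := Finset.mem_image.1 hy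
    have hu₁T : u₁ ∈ Tof C y := mem_Tof.2 ⟨hu₁V, hru₁⟩
    have hTpos : 1 ≤ (Tof C y).card := Finset.card_pos.2 ⟨u₁, hu₁T⟩
    rcases hshape y hy with
      ⟨b, z, hbz, hbV, hzV, hrb, hrz, hmb, hmz, hzero, hT2⟩ |
      ⟨x, hxV, hrx, hsmall, hmx, hS⟩ |
      ⟨x, z, hzx, hxV, hrx, hsmall, hmx1, hmze, h0⟩
    · -- P2 : at most two elements, classified by the z coordinate
      have hmem : ∀ w' ∈ Dy y, w' z ≤ 1 ∧ w' b + w' z = e - 1 ∧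
          ∀ j, j ≠ b → j ≠ z → w' j = 0 := by
        intro w' hw'
        rw [hDydef] at hw'
        simp only [Finset.mem_filter] at hw'
        obtain ⟨hw'l, hle, -⟩ := hw'
        have hw'd : mdeg w' = e - 1 := (mem_lvl.1 hw'l).2
        have hz1 : w' z ≤ 1 := by
          have h9 : w' z ≤ C.m y z := hle z
          omega
        have hzr : ∀ j, j ≠ b → j ≠ z → w' j = 0 := by
          intro j h1 h2
          have h3 : w' j ≤ C.m y j := hle j
          have := hzero j h1 h2
          omega
        have hsum : w' b + w' z = e - 1 := by
          have := mdeg_support_pair (u := w') (x := b) (z := z) hbz hzr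
          omega
        exact ⟨hz1, hsum, hzr⟩
      have hinj : Finset.card (Dy y) ≤ Finset.card ({0, 1} : Finset ℕ) := by
        apply Finset.card_le_card_of_injOn (fun w' => w' z)
        · intro w' hw'
          have := (hmem w' hw').1
          simp only [Finset.coe_insert, Finset.coe_singleton, Set.mem_insert_iff, Set.mem_singleton_iff]
          omega
        · intro w1 h1 w2 h2 hzeq
          obtain ⟨hz1, hsum1, hzr1⟩ := hmem w1 h1
          obtain ⟨hz2, hsum2, hzr2⟩ := hmem w2 h2
          funext j
          by_cases hjb : j = b
          · rw [hjb]
            simp only at hzeq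
            omega
          · by_cases hjz : j = z
            · rw [hjz]; exact hzeq
            · rw [hzr1 j hjb hjz, hzr2 j hjb hjz]
      have : Finset.card ({0, 1} : Finset ℕ) ≤ 2 :=
        (Finset.card_insert_le _ _).trans (by simp)
      omega
    · -- S : at most one element
      have huniq : ∀ w1 ∈ Dy y, ∀ w2 ∈ Dy y, w1 = w2 := by
        have hval : ∀ w' ∈ Dy y, w' = fun j => if j = x then e - 1 else 0 := by
          intro w' hw'
          rw [hDydef] at hw'
          simp only [Finset.mem_filter] at hw'
          obtain ⟨hw'l, hle, -⟩ := hw'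
          have hw'd : mdeg w' = e - 1 := (mem_lvl.1 hw'l).2
          have hzr : ∀ j, j ≠ x → w' j = 0 := by
            intro j hj
            have h3 : w' j ≤ C.m y j := hle j
            have := hS j hj
            omega
          have hx' : w' x = e - 1 := by
            have := mdeg_support_single hzr
            omega
          funext j
          by_cases hj : j = x
          · rw [hj, if_pos rfl, hx']
          · rw [if_neg hj, hzr j hj]
        intro w1 h1 w2 h2
        rw [hval w1 h1, hval w2 h2]
      have := Finset.card_le_one.2 huniq
      omega
    · -- E : at most one element
      have huniq : ∀ w1 ∈ Dy y, ∀ w2 ∈ Dy y, w1 = w2 := by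
        have hval : ∀ w' ∈ Dy y,
            w' = fun j => if j = x then 1 else if j = z then e - 2 else 0 := by
          intro w' hw'
          rw [hDydef] at hw'
          simp only [Finset.mem_filter] at hw'
          obtain ⟨hw'l, hle, v, hvV, hrv, hv1⟩ := hw'
          have hw'd : mdeg w' = e - 1 := (mem_lvl.1 hw'l).2
          have hvx : v = x := hsmall v hvV hrv
          rw [hvx] at hv1
          have hzr : ∀ j, j ≠ x → j ≠ z → w' j = 0 := by
            intro j h1 h2
            have h3 : w' j ≤ C.m y j := hle j
            have := h0 j h1 h2
            omega
          have hx' : w' x = 1 := by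
            have h9 : w' x ≤ C.m y x := hle x
            omega
          have hz' : w' z = e - 2 := by
            have := mdeg_support_pair (u := w') (x := x) (z := z)
              (fun h => hzx h.symm) hzr
            omega
          funext j
          by_cases hj : j = x
          · rw [hj, if_pos rfl, hx']
          · rw [if_neg hj]
            by_cases hjz : j = z
            · rw [hjz, if_pos rfl, hz']
            · rw [if_neg hjz, hzr j hj hjz]
        intro w1 h1 w2 h2
        rw [hval w1 h1, hval w2 h2]
      have := Finset.card_le_one.2 huniq
      omega
  calc (lvl A (e-1)).card
      ≤ (((Vset A).image C.r).biUnion Dy).card := Finset.card_le_card hcov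
    _ ≤ ∑ y ∈ (Vset A).image C.r, (Dy y).card := Finset.card_biUnion_le
    _ ≤ ∑ y ∈ (Vset A).image C.r, (Tof C y).card := Finset.sum_le_sum hsize
    _ = (Vset A).card := sum_Tof C

end StmtAux

namespace StmtAux

open Finset

variable {s : ℕ}

lemma hVec_eq_lvl (A : Finset (Fin s → ℕ)) (j : ℕ) : hVec A j = (lvl A j).card := rfl

lemma getD_hVector (A : Finset (Fin s → ℕ)) {j : ℕ} (hj : j ≤ topDegree A) :
    (hVector A).getD j 0 = hVec A j := by
  rw [hVector, List.getD_eq_getElem?_getD, List.getElem?_map,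
    List.getElem?_range (by omega : j < topDegree A + 1)]
  rfl

end StmtAux

open StmtAux in
theorem stmt_7' (n : ℕ) (hn : 4 ≤ n) (h : List ℕ) (hlen : h.length = n + 1)
    (hpure : IsPureOSequence h)
    (i : ℕ) (hi1 : 2 ≤ i) (hi2 : i ≤ n - 2) (hi : h.getD i 0 = h.getD 1 0) :
    ∀ j, 1 ≤ j → j ≤ n - 1 → h.getD j 0 = h.getD 1 0 := by
  obtain ⟨s, A, hidl, hpu, hvec⟩ := hpure
  obtain ⟨hne, hcl⟩ := hidl
  have htop : topDegree A = n := by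
    have h1 : (hVector A).length = n + 1 := by rw [hvec, hlen]
    rw [hVector, List.length_map, List.length_range] at h1
    omega
  have hgetD : ∀ j, j ≤ n → h.getD j 0 = (lvl A j).card := by
    intro j hj
    rw [← hvec, getD_hVector A (by omega), hVec_eq_lvl]
  set sV := (Vset A).card with hsVdef
  have h1card : (lvl A 1).card = sV := lvl_one_card
  have hL1 : ∀ j, 1 ≤ j → j + 1 ≤ n → sV ≤ (lvl A j).card := by
    intro j hj1 hjn
    exact L1 hcl hne hpu hj1 (by omega)
  have hLU : ∀ t, 2 ≤ t → t + 1 ≤ n → (lvl A t).card ≤ sV →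
      (lvl A (t+1)).card ≤ sV := by
    intro t ht2 htn hle
    obtain ⟨C⟩ := exists_cfg hcl hne hpu (e := t) (by omega) (by omega)
    exact LU C hcl hle (by omega)
  have hLK2 : ∀ t, 2 ≤ t → t + 1 ≤ n → (lvl A t).card ≤ sV →
      sV ≤ (lvl A (t+1)).card → (lvl A (t-1)).card ≤ sV := by
    intro t ht2 htn hle hge
    obtain ⟨C⟩ := exists_cfg hcl hne hpu (e := t) (by omega) (by omega)
    exact LK2 C hcl hne hpu hle hge (by omega) (by omega)
  have hicard : (lvl A i).card = sV := by
    have e1 := hgetD i (by omega)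
    have e2 := hgetD 1 (by omega)
    rw [e1, e2, h1card] at hi
    exact hi
  -- downward propagation
  have hdown : ∀ d, d ≤ i - 1 → (lvl A (i - d)).card = sV := by
    intro d
    induction d with
    | zero => intro _; simpa using hicard
    | succ d ih =>
      intro hd
      have ht := ih (by omega)
      have ht2 : 2 ≤ i - d := by omega
      have htn : (i - d) + 1 ≤ n := by omega
      have hup2 : sV ≤ (lvl A ((i - d) + 1)).card := hL1 _ (by omega) (by omega)
      have hstep := hLK2 (i - d) ht2 htn (le_of_eq ht) hup2
      have hge := hL1 (i - d - 1) (by omega) (by omega)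
      rw [show i - (d + 1) = i - d - 1 by omega]
      omega
  -- upward propagation
  have hup : ∀ d, i + d ≤ n - 1 → (lvl A (i + d)).card = sV := by
    intro d
    induction d with
    | zero => intro _; simpa using hicard
    | succ d ih =>
      intro hd
      have ht := ih (by omega)
      have hle := hLU (i + d) (by omega) (by omega) (le_of_eq ht)
      have hge := hL1 (i + d + 1) (by omega) (by omega)
      rw [show i + (d + 1) = (i + d) + 1 by omega]
      omega
  intro j hj1 hjn
  rw [hgetD j (by omega), hgetD 1 (by omega), h1card]
  rcases le_or_gt j i with hji | hji
  · have := hdown (i - j) (by omega)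
    rw [show i - (i - j) = j by omega] at this
    exact this
  · have := hup (j - i) (by omega)
    rw [show i + (j - i) = j by omega] at this
    exact this


/-- For `n ≥ 4`, if `h = (1, h_1, ..., h_n)` is a pure O-sequence with positive
entries and `h_1 = h_i` for some `2 ≤ i ≤ n-2`, then `h_j = h_1` for all
`1 ≤ j ≤ n-1`. -/
theorem stmt_7 (n : ℕ) (hn : 4 ≤ n) (h : List ℕ) (hlen : h.length = n + 1)
    (h0 : h.getD 0 0 = 1) (hpos : ∀ j < h.length, 0 < h.getD j 0)
    (hpure : IsPureOSequence h)
    (i : ℕ) (hi1 : 2 ≤ i) (hi2 : i ≤ n - 2) (hi : h.getD i 0 = h.getD 1 0) :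
    ∀ j, 1 ≤ j → j ≤ n - 1 → h.getD j 0 = h.getD 1 0 :=
  stmt_7' n hn h hlen hpure i hi1 hi2 hi
end
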